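/- arXiv:1503.04856 — 7 statements merged into one kernel-verified Lean document; each statement's English description precedes it below -/
import Mathlib

section
/- Let H be a complex Hilbert space, let {φ_n}_{n≥0} be a sequence of unit vectors in H, and let {g_n}_{n≥0} be the Kaczmarz auxiliary sequence defined by g_0 = φ_0 and g_n = φ_n − Σ_{i=0}^{n−1} ⟨φ_n, φ_i⟩ g_i. For x ∈ H, define the Kaczmarz iterates x_0 = ⟨x, φ_0⟩φ_0 and x_n = x_{n−1} + ⟨x − x_{n−1}, φ_n⟩φ_n for n ≥ 1. Then for every n ∈ ℕ, x_n = Σ_{i=0}^{n} ⟨x, g_i⟩ φ_i. -/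
open Filter

/-- In a complex Hilbert space `H`, let `{φ_n}` be unit vectors with Kaczmarz
auxiliary sequence `g_0 = φ_0`, `g_n = φ_n - Σ_{i<n} ⟨φ_n, φ_i⟩ g_i`, and for `x ∈ H` let the
Kaczmarz iterates be `x_0 = ⟨x, φ_0⟩ φ_0`, `x_n = x_{n-1} + ⟨x - x_{n-1}, φ_n⟩ φ_n`.
Then `x_n = Σ_{i=0}^n ⟨x, g_i⟩ φ_i` for every `n`.
(Here `⟨u, v⟩` denotes the inner product linear in the first slot, i.e. `inner v u` in Mathlib.) -/
theorem kaczmarz_iterates_formula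
    {H : Type*} [NormedAddCommGroup H] [InnerProductSpace ℂ H] [CompleteSpace H]
    (φ : ℕ → H) (hφ : ∀ n, ‖φ n‖ = 1)
    (g : ℕ → H)
    (hg0 : g 0 = φ 0)
    (hg : ∀ n : ℕ, g (n + 1) =
      φ (n + 1) - ∑ i ∈ Finset.range (n + 1), (inner ℂ (φ i) (φ (n + 1)) : ℂ) • g i)
    (x : H) (X : ℕ → H)
    (hX0 : X 0 = (inner ℂ (φ 0) x : ℂ) • φ 0)
    (hX : ∀ n : ℕ, X (n + 1) = X n + (inner ℂ (φ (n + 1)) (x - X n) : ℂ) • φ (n + 1)) :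
    ∀ n : ℕ, X n = ∑ i ∈ Finset.range (n + 1), (inner ℂ (g i) x : ℂ) • φ i := by
  intro n
  induction n with
  | zero => simpa [hg0] using hX0
  | succ n ih =>
    have key : (inner ℂ (φ (n + 1)) (x - X n) : ℂ) = inner ℂ (g (n + 1)) x := by
      rw [ih, hg n]
      simp only [inner_sub_left, inner_sub_right, sum_inner, inner_sum,
        inner_smul_left, inner_smul_right]
      congr 1
      refine Finset.sum_congr rfl fun i _ => ?_
      rw [← inner_conj_symm (φ i) (φ (n + 1)), starRingEnd_self_apply, mul_comm]
    rw [hX n, key, Finset.sum_range_succ, ← ih]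
end

section
/- Let H be a complex Hilbert space and let {φ_n}_{n≥0} be a sequence of unit vectors in H that is effective, i.e., for every x ∈ H the Kaczmarz iterates x_0 = ⟨x, φ_0⟩φ_0, x_n = x_{n−1} + ⟨x − x_{n−1}, φ_n⟩φ_n converge to x in norm. Let {g_n}_{n≥0} be the Kaczmarz auxiliary sequence of {φ_n}. Then {φ_n} and {g_n} form a pair of pseudoframes: for all x, y ∈ H, ⟨x, y⟩ = Σ_{n=0}^∞ ⟨x, g_n⟩⟨φ_n, y⟩. -/
open Filter

/-- In a complex Hilbert space `H`, if the sequence of unit vectors `{φ_n}` is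
effective (for every `x`, the Kaczmarz iterates converge to `x` in norm) and `{g_n}` is its
Kaczmarz auxiliary sequence, then `{φ_n}` and `{g_n}` form a pair of pseudoframes:
`⟨x, y⟩ = Σ_{n=0}^∞ ⟨x, g_n⟩ ⟨φ_n, y⟩` for all `x, y ∈ H`, the series being the limit of
its partial sums.
(Here `⟨u, v⟩` denotes the inner product linear in the first slot, i.e. `inner v u` in Mathlib.) -/
theorem effective_implies_pseudoframe
    {H : Type*} [NormedAddCommGroup H] [InnerProductSpace ℂ H] [CompleteSpace H]
    (φ : ℕ → H) (hφ : ∀ n, ‖φ n‖ = 1)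
    (g : ℕ → H)
    (hg0 : g 0 = φ 0)
    (hg : ∀ n : ℕ, g (n + 1) =
      φ (n + 1) - ∑ i ∈ Finset.range (n + 1), (inner ℂ (φ i) (φ (n + 1)) : ℂ) • g i)
    (heff : ∀ (x : H) (X : ℕ → H),
      X 0 = (inner ℂ (φ 0) x : ℂ) • φ 0 →
      (∀ n : ℕ, X (n + 1) = X n + (inner ℂ (φ (n + 1)) (x - X n) : ℂ) • φ (n + 1)) →
      Tendsto X atTop (nhds x)) :
    ∀ x y : H,
      Tendsto (fun N => ∑ n ∈ Finset.range N, (inner ℂ (g n) x : ℂ) * (inner ℂ y (φ n) : ℂ))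
        atTop (nhds (inner ℂ y x : ℂ)) := by
  intro x y
  set X : ℕ → H := fun n => ∑ i ∈ Finset.range (n + 1), (inner ℂ (g i) x : ℂ) • φ i with hX
  have hX0 : X 0 = (inner ℂ (φ 0) x : ℂ) • φ 0 := by simp [hX, hg0]
  have hrec : ∀ n : ℕ, X (n + 1) = X n + (inner ℂ (φ (n + 1)) (x - X n) : ℂ) • φ (n + 1) := by
    intro n
    have hcoef : (inner ℂ (g (n + 1)) x : ℂ) = inner ℂ (φ (n + 1)) (x - X n) := by
      rw [hg n]
      simp only [hX, inner_sub_left, inner_sub_right, sum_inner, inner_sum,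
        inner_smul_left, inner_smul_right, inner_conj_symm]
      congr 1
      exact Finset.sum_congr rfl fun i _ => mul_comm _ _
    have : X (n + 1) = X n + (inner ℂ (g (n + 1)) x : ℂ) • φ (n + 1) := by
      simp [hX, Finset.sum_range_succ]
    rw [this, hcoef]
  have hlim := heff x X hX0 hrec
  have hcont : Tendsto (fun n => (inner ℂ y (X n) : ℂ)) atTop (nhds (inner ℂ y x : ℂ)) :=
    Tendsto.inner tendsto_const_nhds hlim
  have heq : ∀ n : ℕ, (inner ℂ y (X n) : ℂ)
      = ∑ i ∈ Finset.range (n + 1), (inner ℂ (g i) x : ℂ) * (inner ℂ y (φ i) : ℂ) := by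
    intro n; simp [hX, inner_sum, inner_smul_right]
  rw [← tendsto_add_atTop_iff_nat 1]
  simpa [heq] using hcont
end

section
/- Let H be a complex Hilbert space, {φ_n}_{n≥0} a sequence of unit vectors in H with Kaczmarz auxiliary sequence {g_n}_{n≥0}, and for x ∈ H let {x_n} be the Kaczmarz iterates. Then the limit lim_{n→∞} ‖x − x_n‖² exists and ‖x‖² − lim_{n→∞} ‖x − x_n‖² = Σ_{n=0}^∞ |⟨x, g_n⟩|². -/
open Filter
lemma aux_pyth {H : Type*} [NormedAddCommGroup H] [InnerProductSpace ℂ H]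
    (u v : H) (hv : ‖v‖ = 1) :
    ‖u - (inner ℂ v u : ℂ) • v‖ ^ 2 = ‖u‖ ^ 2 - ‖(inner ℂ v u : ℂ)‖ ^ 2 := by
  set c : ℂ := inner ℂ v u with hc
  have h1 : (inner ℂ u (c • v) : ℂ) = c * (starRingEnd ℂ) c := by
    rw [inner_smul_right, hc, ← inner_conj_symm u v]
  rw [norm_sub_sq (𝕜 := ℂ), h1, RCLike.mul_conj, norm_smul, hv]
  rw [← RCLike.ofReal_pow, RCLike.ofReal_re]
  ring


/-- In a complex Hilbert space `H`, for a sequence of unit vectors `{φ_n}` with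
Kaczmarz auxiliary sequence `{g_n}` and Kaczmarz iterates `{x_n}` of a vector `x`, the limit
`lim_n ‖x - x_n‖²` exists and `‖x‖² - lim_n ‖x - x_n‖² = Σ_{n=0}^∞ |⟨x, g_n⟩|²`.
(Here `⟨u, v⟩` denotes the inner ℂ product linear in the first slot, i.e. `inner ℂ v u` in Mathlib.) -/
theorem kaczmarz_energy_identity
    {H : Type*} [NormedAddCommGroup H] [InnerProductSpace ℂ H] [CompleteSpace H]
    (φ : ℕ → H) (hφ : ∀ n, ‖φ n‖ = 1)
    (g : ℕ → H)
    (hg0 : g 0 = φ 0)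
    (hg : ∀ n : ℕ, g (n + 1) =
      φ (n + 1) - ∑ i ∈ Finset.range (n + 1), (inner ℂ (φ i) (φ (n + 1)) : ℂ) • g i)
    (x : H) (X : ℕ → H)
    (hX0 : X 0 = (inner ℂ (φ 0) x : ℂ) • φ 0)
    (hX : ∀ n : ℕ, X (n + 1) = X n + (inner ℂ (φ (n + 1)) (x - X n) : ℂ) • φ (n + 1)) :
    ∃ L : ℝ, Tendsto (fun n => ‖x - X n‖ ^ 2) atTop (nhds L) ∧
      HasSum (fun n => ‖(inner ℂ (g n) x : ℂ)‖ ^ 2) (‖x‖ ^ 2 - L) := by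
  -- X n is the partial sum ∑ ⟨g i, x⟩ • φ i, and ⟨g (n+1), x⟩ = ⟨φ (n+1), x - X n⟩
  have key : ∀ n, X n = ∑ i ∈ Finset.range (n + 1), (inner ℂ (g i) x : ℂ) • φ i := by
    intro n
    induction n with
    | zero => simp [hX0, hg0]
    | succ n ih =>
      have hgx : (inner ℂ (g (n + 1)) x : ℂ)
          = inner ℂ (φ (n + 1)) (x - ∑ i ∈ Finset.range (n + 1), (inner ℂ (g i) x : ℂ) • φ i) := by
        rw [hg n]
        simp only [inner_sub_left, inner_sub_right, sum_inner, inner_sum,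
          inner_smul_left, inner_smul_right, inner_conj_symm]
        congr 1
        exact Finset.sum_congr rfl fun i _ => by ring
      rw [hX n, ih, Finset.sum_range_succ (fun i => (inner ℂ (g i) x : ℂ) • φ i) (n + 1), hgx]
  have hcoef : ∀ n, (inner ℂ (g (n + 1)) x : ℂ) = inner ℂ (φ (n + 1)) (x - X n) := by
    intro n
    rw [key n, hg n]
    simp only [inner_sub_left, inner_sub_right, sum_inner, inner_sum,
      inner_smul_left, inner_smul_right, inner_conj_symm]
    congr 1
    exact Finset.sum_congr rfl fun i _ => by ring
  have hpartial : ∀ n, ‖x - X n‖ ^ 2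
      = ‖x‖ ^ 2 - ∑ i ∈ Finset.range (n + 1), ‖(inner ℂ (g i) x : ℂ)‖ ^ 2 := by
    intro n
    induction n with
    | zero => simp [hX0, hg0, aux_pyth x (φ 0) (hφ 0)]
    | succ n ih =>
      have h1 : x - X (n + 1) = (x - X n) - (inner ℂ (φ (n + 1)) (x - X n) : ℂ) • φ (n + 1) := by
        rw [hX n]; abel
      rw [h1, aux_pyth (x - X n) (φ (n + 1)) (hφ (n + 1)), ih, ← hcoef n,
        Finset.sum_range_succ (fun i => ‖(inner ℂ (g i) x : ℂ)‖ ^ 2) (n + 1)]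
      ring
  -- summability
  have hsummable : Summable fun n => ‖(inner ℂ (g n) x : ℂ)‖ ^ 2 := by
    apply summable_of_sum_range_le (c := ‖x‖ ^ 2) (fun n => sq_nonneg _)
    intro n
    rcases n with _ | m
    · simp [sq_nonneg]
    · have := hpartial m
      nlinarith [sq_nonneg ‖x - X m‖]
  set S := ∑' n, ‖(inner ℂ (g n) x : ℂ)‖ ^ 2 with hS
  have hHasSum : HasSum (fun n => ‖(inner ℂ (g n) x : ℂ)‖ ^ 2) S := hsummable.hasSum
  refine ⟨‖x‖ ^ 2 - S, ?_, ?_⟩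
  · have h1 : Tendsto (fun n => ∑ i ∈ Finset.range (n + 1), ‖(inner ℂ (g i) x : ℂ)‖ ^ 2)
        atTop (nhds S) :=
      hHasSum.tendsto_sum_nat.comp (tendsto_add_atTop_nat 1)
    have h2 := tendsto_const_nhds (x := ‖x‖ ^ 2) (f := atTop (α := ℕ)) |>.sub h1
    refine h2.congr fun n => ?_
    exact (hpartial n).symm
  · have : ‖x‖ ^ 2 - (‖x‖ ^ 2 - S) = S := by ring
    rw [this]
    exact hHasSum
end

section
/- Let μ be a Borel probability measure on [0,1) with Fourier–Stieltjes transform μ̂, and define α_0 = 1 and, for n ≥ 1, α_n = Σ_{p ∈ P_n} (−1)^{l(p)} Π_{j=1}^{l(p)} μ̂(p_j), where P_n is the set of compositions of n and l(p) is the length of the composition p. Let {g_n}_{n≥0} be the Kaczmarz auxiliary sequence associated to the exponentials {e_n}_{n≥0} in L²(μ). Then for all n ∈ ℕ, g_n = Σ_{j=0}^{n} conj(α_{n−j}) e_j. -/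
open MeasureTheory Filter

lemma comp_rec (f : ℕ → ℂ) (m : ℕ) :
    (∑ p : Composition (m+1), (-1:ℂ)^p.length * ((p.blocks.map fun q => f q).prod))
    = ∑ k ∈ Finset.range (m+1), ∑ p : Composition (m-k),
        (-(f (k+1))) * ((-1:ℂ)^p.length * ((p.blocks.map fun q => f q).prod)) := by
  rw [← Finset.sum_sigma (Finset.range (m+1)) (fun k => (Finset.univ : Finset (Composition (m-k))))
    (fun x => (-(f (x.1+1))) * ((-1:ℂ)^x.2.length * ((x.2.blocks.map fun q => f q).prod)))]
  refine (Finset.sum_bij' (i := ?_) (j := ?_) ?_ ?_ ?_ ?_ ?_).symm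
  · -- i : sigma → Composition (m+1)
    intro x hx
    refine ⟨(x.1+1) :: x.2.blocks, ?_, ?_⟩
    · intro i hi
      rcases List.mem_cons.1 hi with h | h
      · omega
      · exact x.2.blocks_pos h
    · have hk : x.1 ≤ m := by
        have := Finset.mem_sigma.1 hx
        have := Finset.mem_range.1 this.1
        omega
      simp only [List.sum_cons, x.2.blocks_sum]
      omega
  · -- j : Composition (m+1) → sigma
    intro c hc
    exact ⟨c.blocks.head! - 1, c.blocks.tail,
      fun hi => c.blocks_pos (List.mem_of_mem_tail hi), by
        have hne : c.blocks ≠ [] := by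
          intro h
          have := c.blocks_sum
          simp [h] at this
        have hpos : 0 < c.blocks.head! := c.blocks_pos (List.head!_mem_self hne)
        have hsum : c.blocks.head! + c.blocks.tail.sum = m + 1 := by
          have := c.blocks_sum
          rw [← List.cons_head!_tail hne] at this
          simpa using this
        omega⟩
  · intro x hx
    exact Finset.mem_univ _
  · intro c hc
    rw [Finset.mem_sigma]
    constructor
    · show c.blocks.head! - 1 ∈ Finset.range (m+1)
      rw [Finset.mem_range]
      have hne : c.blocks ≠ [] := by
        intro h; have := c.blocks_sum; simp [h] at this
      have hpos : 0 < c.blocks.head! := c.blocks_pos (List.head!_mem_self hne)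
      have hsum : c.blocks.head! + c.blocks.tail.sum = m + 1 := by
        have := c.blocks_sum
        rw [← List.cons_head!_tail hne] at this
        simpa using this
      omega
    · exact Finset.mem_univ _
  · intro x hx
    rcases x with ⟨k, p⟩
    simp only [List.head!_cons, List.tail_cons]
    rfl
  · intro c hc
    have hne : c.blocks ≠ [] := by
      intro h; have := c.blocks_sum; simp [h] at this
    have hpos : 0 < c.blocks.head! := c.blocks_pos (List.head!_mem_self hne)
    apply Composition.ext
    simp only []
    rw [Nat.sub_add_cancel hpos, List.cons_head!_tail hne]
  · intro x hx
    rcases x with ⟨k, p⟩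
    simp only [Composition.length, List.length_cons, List.map_cons, List.prod_cons, pow_succ]
    ring

lemma tri_swap {M : Type*} [AddCommMonoid M] (F : ℕ → ℕ → M) (N : ℕ) :
    ∑ i ∈ Finset.range N, ∑ j ∈ Finset.range (i+1), F i j
      = ∑ j ∈ Finset.range N, ∑ i ∈ Finset.Ico j N, F i j := by
  rw [Finset.sum_sigma', Finset.sum_sigma']
  refine Finset.sum_bij' (i := fun x _ => ⟨x.2, x.1⟩) (j := fun x _ => ⟨x.2, x.1⟩)
    ?_ ?_ ?_ ?_ ?_
  · rintro ⟨a, b⟩ hx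
    simp only [Finset.mem_sigma, Finset.mem_range, Finset.mem_Ico] at hx ⊢
    exact ⟨by omega, by omega, by omega⟩
  · rintro ⟨a, b⟩ hx
    simp only [Finset.mem_sigma, Finset.mem_range, Finset.mem_Ico] at hx ⊢
    exact ⟨by omega, by omega⟩
  · intro x hx; rfl
  · intro x hx; rfl
  · intro x hx; rfl

lemma map_coe_prod (f : ℝ → ℂ) (l : List ℕ) :
    (List.map f (l >>= fun a => pure ((a : ℝ)))).prod
      = (List.map (fun q : ℕ => f (q : ℝ)) l).prod := by
  induction l with
  | nil => simp
  | cons a l ih =>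
    simp only [List.flatMap_cons, List.pure_def, List.singleton_append, List.map_cons,
      List.prod_cons, List.bind_eq_flatMap] at *
    rw [ih]

/-- Let `μ` be a Borel probability measure on `[0,1)` with Fourier–Stieltjes
transform `μ̂(x) = ∫₀¹ exp(-2πixy) dμ(y)`.  With `α_0 = 1` and
`α_n = Σ_{p ∈ P_n} (-1)^{l(p)} Π_{j=1}^{l(p)} μ̂(p_j)` (sum over all compositions `p` of `n`,
`l(p)` the length of `p`), the Kaczmarz auxiliary sequence `{g_n}` of the exponentials
`e_n(x) = exp(2πinx)` in `L²(μ)` satisfies `g_n = Σ_{j=0}^n conj(α_{n-j}) e_j` for all `n`. -/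
theorem gn_composition_formula
    (μ : Measure ℝ) [IsProbabilityMeasure μ]
    (hsupp : μ (Set.Ico (0 : ℝ) 1)ᶜ = 0)
    (μhat : ℝ → ℂ)
    (hμhat : ∀ x : ℝ, μhat x = ∫ y, Complex.exp (-(2 * Real.pi * Complex.I * x * y)) ∂μ)
    (α : ℕ → ℂ)
    (hα0 : α 0 = 1)
    (hα : ∀ n : ℕ, 0 < n → α n = ∑ p : Composition n,
      (-1 : ℂ) ^ p.length * (p.blocks.map fun q => μhat (q : ℝ)).prod)
    (e : ℕ → Lp ℂ 2 μ)
    (he : ∀ n : ℕ, (e n : ℝ → ℂ) =ᵐ[μ]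
      fun x => Complex.exp (2 * Real.pi * Complex.I * n * x))
    (g : ℕ → Lp ℂ 2 μ)
    (hg0 : g 0 = e 0)
    (hg : ∀ n : ℕ, g (n + 1) =
      e (n + 1) - ∑ i ∈ Finset.range (n + 1), (inner ℂ (e i) (e (n + 1)) : ℂ) • g i) :
    ∀ n : ℕ, g n = ∑ j ∈ Finset.range (n + 1), (starRingEnd ℂ) (α (n - j)) • e j := by
  -- sum over compositions of d equals α d (also for d = 0), in "generic" form
  have hαsum : ∀ d : ℕ, (∑ p : Composition d,
      (-1 : ℂ) ^ p.length * ((p.blocks.map (fun q : ℕ => μhat (q : ℝ))).prod)) = α d := by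
    intro d
    rcases Nat.eq_zero_or_pos d with hd | hd
    · subst hd
      have h0 : ∀ p : Composition 0, p.blocks = [] := by
        intro p
        have hs := p.blocks_sum
        cases hb : p.blocks with
        | nil => rfl
        | cons a l =>
          have ha := p.blocks_pos (hb ▸ List.mem_cons_self (a := a) (l := l))
          rw [hb] at hs
          simp only [List.sum_cons] at hs
          omega
      haveI : Unique (Composition 0) :=
        { default := ⟨[], by simp, rfl⟩
          uniq := fun p => Composition.ext (by rw [h0 p]) }
      rw [Fintype.sum_unique]
      simp [hα0, Composition.length, h0]
    · rw [hα d hd]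
      refine Finset.sum_congr rfl fun p _ => ?_
      rw [map_coe_prod]
  -- recursion for α
  have hαrec : ∀ m : ℕ, α (m + 1)
      = -∑ k ∈ Finset.range (m + 1), μhat (((k + 1 : ℕ) : ℝ)) * α (m - k) := by
    intro m
    rw [← hαsum (m+1), comp_rec (fun q : ℕ => μhat (q : ℝ)) m, ← Finset.sum_neg_distrib]
    refine Finset.sum_congr rfl fun k hk => ?_
    rw [← hαsum (m - k), Finset.mul_sum, ← Finset.sum_neg_distrib]
    refine Finset.sum_congr rfl fun p _ => ?_
    ring
  -- inner products of exponentials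
  have hinner : ∀ i n : ℕ, i ≤ n →
      (inner ℂ (e i) (e n) : ℂ) = (starRingEnd ℂ) (μhat (((n - i : ℕ) : ℝ))) := by
    intro i n hin
    rw [MeasureTheory.L2.inner_def]
    have h1 : (fun x => (inner ℂ (e i x) (e n x) : ℂ))
        =ᵐ[μ] fun x => Complex.exp (2 * Real.pi * Complex.I * (((n - i : ℕ) : ℝ) : ℂ) * x) := by
      filter_upwards [he i, he n] with x hxi hxn
      simp only [RCLike.inner_apply, hxi, hxn]
      rw [← Complex.exp_conj, ← Complex.exp_add]
      congr 1
      simp only [map_mul, Complex.conj_I, Complex.conj_ofReal, map_ofNat, map_natCast]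
      push_cast [Nat.cast_sub hin]
      ring
    rw [integral_congr_ae h1, hμhat, ← integral_conj]
    refine integral_congr_ae (Filter.Eventually.of_forall fun y => ?_)
    simp only [← Complex.exp_conj, map_neg, map_mul, Complex.conj_I, Complex.conj_ofReal,
      map_ofNat, map_natCast]
    congr 1
    ring
  -- main induction
  intro n
  induction n using Nat.strong_induction_on with
  | _ n ih =>
    match n with
    | 0 =>
      rw [hg0]
      simp [hα0]
    | (n+1) =>
      rw [hg n]
      have hstep : ∀ i ∈ Finset.range (n+1), (inner ℂ (e i) (e (n+1)) : ℂ) • g i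
          = ∑ j ∈ Finset.range (i+1),
              ((starRingEnd ℂ) (μhat (((n+1-i : ℕ) : ℝ))) * (starRingEnd ℂ) (α (i - j))) • e j := by
        intro i hi
        rw [Finset.mem_range] at hi
        rw [hinner i (n+1) (by omega), ih i (by omega), Finset.smul_sum]
        refine Finset.sum_congr rfl fun j hj => ?_
        rw [smul_smul]
      rw [Finset.sum_congr rfl hstep,
        tri_swap (fun i j => ((starRingEnd ℂ) (μhat (((n+1-i : ℕ) : ℝ)))
          * (starRingEnd ℂ) (α (i - j))) • e j) (n+1)]
      have hS : (∑ j ∈ Finset.range (n+1), ∑ i ∈ Finset.Ico j (n+1),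
            ((starRingEnd ℂ) (μhat (((n+1-i : ℕ) : ℝ))) * (starRingEnd ℂ) (α (i - j))) • e j)
          = -∑ j ∈ Finset.range (n+1), (starRingEnd ℂ) (α (n + 1 - j)) • e j := by
        rw [← Finset.sum_neg_distrib]
        refine Finset.sum_congr rfl fun j hj => ?_
        rw [Finset.mem_range] at hj
        rw [← Finset.sum_smul, ← neg_smul]
        congr 1
        have key : (∑ i ∈ Finset.Ico j (n+1), μhat (((n+1-i : ℕ) : ℝ)) * α (i - j))
            = -α (n + 1 - j) := by
          rw [Finset.sum_Ico_eq_sum_range]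
          have hnj : n + 1 - j = (n - j) + 1 := by omega
          rw [hnj]
          calc ∑ k ∈ Finset.range ((n-j)+1), μhat (((n+1-(j+k) : ℕ) : ℝ)) * α (j + k - j)
              = ∑ k ∈ Finset.range ((n-j)+1),
                  (fun k => μhat (((k+1 : ℕ) : ℝ)) * α ((n-j)-k)) ((n-j)+1-1-k) := by
                refine Finset.sum_congr rfl fun k hk => ?_
                rw [Finset.mem_range] at hk
                simp only []
                have e1 : n+1-(j+k) = (n-j)+1-1-k+1 := by omega
                have e2 : j + k - j = (n-j) - ((n-j)+1-1-k) := by omega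
                rw [e1, e2]
            _ = ∑ k ∈ Finset.range ((n-j)+1), μhat (((k+1 : ℕ) : ℝ)) * α ((n-j)-k) :=
                Finset.sum_range_reflect (fun k => μhat (((k+1 : ℕ) : ℝ)) * α ((n-j)-k)) ((n-j)+1)
            _ = -α ((n-j)+1) := by rw [hαrec (n-j)]; ring
        calc (∑ i ∈ Finset.Ico j (n+1),
              (starRingEnd ℂ) (μhat (((n+1-i : ℕ) : ℝ))) * (starRingEnd ℂ) (α (i - j)))
            = (starRingEnd ℂ) (∑ i ∈ Finset.Ico j (n+1),
                μhat (((n+1-i : ℕ) : ℝ)) * α (i - j)) := by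
              rw [map_sum]
              exact Finset.sum_congr rfl fun i _ => (map_mul _ _ _).symm
          _ = -(starRingEnd ℂ) (α (n + 1 - j)) := by rw [key, map_neg]
      have hlast : (starRingEnd ℂ) (α (n + 1 - (n+1))) • e (n+1) = e (n+1) := by
        simp [hα0]
      rw [hS, sub_neg_eq_add,
        Finset.sum_range_succ (fun j => (starRingEnd ℂ) (α (n + 1 - j)) • e j) (n+1),
        hlast, add_comm]
end

section
/- Let μ be a singular Borel probability measure on [0,1). Suppose ν and ν′ are Borel probability measures on [0,1), each singular with respect to Lebesgue measure and each mutually singular with μ; let 0 < η, η′ ≤ 1, λ = ημ + (1−η)ν, λ′ = η′μ + (1−η′)ν′, and let {h_n} and {h′_n} be the Kaczmarz auxiliary sequences of the exponentials in L²(λ) and L²(λ′) respectively. If λ ≠ λ′, then the sequences {η h_n} and {η′ h′_n} are distinct as sequences in L²(μ), i.e., there exists n with η h_n ≠ η′ h′_n in L²(μ). -/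
open MeasureTheory Filter

lemma coeFn_finset_sum {m : Measure ℝ} (s : Finset ℕ) (f : ℕ → Lp ℂ 2 m) :
    ⇑(∑ i ∈ s, f i) =ᵐ[m] fun x => ∑ i ∈ s, (f i : ℝ → ℂ) x := by
  classical
  induction s using Finset.induction with
  | empty => simp only [Finset.sum_empty]; exact Lp.coeFn_zero (E := ℂ) (p := 2) (μ := m)
  | @insert a s h ih =>
      rw [Finset.sum_insert h]
      filter_upwards [Lp.coeFn_add (f a) (∑ i ∈ s, f i), ih] with x hx hx2
      simp only [Pi.add_apply] at hx
      rw [hx, Finset.sum_insert h, hx2]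


lemma aux_measure_ext (lam lam' : Measure ℝ) [IsProbabilityMeasure lam] [IsProbabilityMeasure lam']
    (hc : lam (Set.Ico (0:ℝ) 1)ᶜ = 0) (hc' : lam' (Set.Ico (0:ℝ) 1)ᶜ = 0)
    (hF : ∀ n : ℕ, ∫ x, Complex.exp (2 * Real.pi * Complex.I * n * x) ∂lam
        = ∫ x, Complex.exp (2 * Real.pi * Complex.I * n * x) ∂lam') :
    lam = lam' := by
  haveI : Fact ((0:ℝ) < 1) := ⟨zero_lt_one⟩
  have hFZ : ∀ n : ℤ, ∫ x, Complex.exp (2 * Real.pi * Complex.I * n * x) ∂lam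
      = ∫ x, Complex.exp (2 * Real.pi * Complex.I * n * x) ∂lam' := by
    intro n
    rcases le_or_gt 0 n with hn | hn
    · have e : ((n.toNat : ℕ) : ℂ) = (n : ℂ) := by exact_mod_cast congrArg (Int.cast : ℤ → ℂ) (Int.toNat_of_nonneg hn)
      have := hF n.toNat
      simp only [e] at this
      exact this
    · have e : (((-n).toNat : ℕ) : ℂ) = -(n : ℂ) := by
        exact_mod_cast congrArg (Int.cast : ℤ → ℂ) (Int.toNat_of_nonneg (neg_nonneg.mpr hn.le))
      have key : ∀ x : ℝ, Complex.exp (2 * Real.pi * Complex.I * n * x)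
          = (starRingEnd ℂ) (Complex.exp (2 * Real.pi * Complex.I * ((-n).toNat) * x)) := by
        intro x
        rw [← Complex.exp_conj]
        congr 1
        simp only [map_mul, Complex.conj_I, Complex.conj_ofReal, Complex.conj_natCast,
          map_intCast, map_neg, map_ofNat, e]
        ring
      simp_rw [key]
      rw [integral_conj, integral_conj, hF]
  set c : ℝ → AddCircle (1:ℝ) := ((↑) : ℝ → AddCircle (1:ℝ)) with hcdef
  have hcm : Measurable c := AddCircle.measurable_mk'
  set m := lam.map c with hm
  set m' := lam'.map c with hm'
  haveI : IsProbabilityMeasure m := Measure.isProbabilityMeasure_map hcm.aemeasurable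
  haveI : IsProbabilityMeasure m' := Measure.isProbabilityMeasure_map hcm.aemeasurable
  -- integrability of continuous maps
  have hint : ∀ (κ : Measure (AddCircle (1:ℝ))) [IsFiniteMeasure κ] (f : C(AddCircle (1:ℝ), ℂ)),
      Integrable f κ := by
    intro κ _ f
    exact (BoundedContinuousFunction.mkOfCompact f).integrable κ
  -- continuity of integration
  have hcont : ∀ (κ : Measure (AddCircle (1:ℝ))) [IsProbabilityMeasure κ],
      Continuous (fun f : C(AddCircle (1:ℝ), ℂ) => ∫ y, f y ∂κ) := by
    intro κ _
    refine (LipschitzWith.of_dist_le_mul (K := 1) ?_).continuous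
    intro f g
    rw [dist_eq_norm, ← BoundedContinuousFunction.dist_mkOfCompact, dist_eq_norm]
    have h1 : ∫ y, f y ∂κ - ∫ y, g y ∂κ = ∫ y, (f - g) y ∂κ := by
      rw [← integral_sub (hint κ f) (hint κ g)]; simp
    rw [h1]
    have h2 := (BoundedContinuousFunction.mkOfCompact (f - g)).norm_integral_le_mul_norm κ
    simpa [measure_univ] using h2
  -- the set of functions with equal integrals
  have hall : ∀ f : C(AddCircle (1:ℝ), ℂ), ∫ y, f y ∂m = ∫ y, f y ∂m' := by
    have hSc : IsClosed {f : C(AddCircle (1:ℝ), ℂ) | ∫ y, f y ∂m = ∫ y, f y ∂m'} :=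
      isClosed_eq (hcont m) (hcont m')
    set S : Submodule ℂ C(AddCircle (1:ℝ), ℂ) :=
      { carrier := {f | ∫ y, f y ∂m = ∫ y, f y ∂m'}
        add_mem' := by
          intro f g hf hg
          simp only [Set.mem_setOf_eq] at *
          rw [show ((f + g : C(AddCircle (1:ℝ), ℂ))) = f + g from rfl]
          have e1 : ∫ y, (f + g) y ∂m = ∫ y, f y ∂m + ∫ y, g y ∂m := by
            rw [← integral_add (hint m f) (hint m g)]; simp
          have e2 : ∫ y, (f + g) y ∂m' = ∫ y, f y ∂m' + ∫ y, g y ∂m' := by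
            rw [← integral_add (hint m' f) (hint m' g)]; simp
          rw [e1, e2, hf, hg]
        zero_mem' := by simp
        smul_mem' := by
          intro a f hf
          simp only [Set.mem_setOf_eq] at *
          have e1 : ∫ y, (a • f) y ∂m = a • ∫ y, f y ∂m := by
            rw [← integral_smul]; simp
          have e2 : ∫ y, (a • f) y ∂m' = a • ∫ y, f y ∂m' := by
            rw [← integral_smul]; simp
          rw [e1, e2, hf] } with hSdef
    have hfour : ∀ n : ℤ, (fourier n : C(AddCircle (1:ℝ), ℂ)) ∈ S := by
      intro n
      show ∫ y, fourier n y ∂m = ∫ y, fourier n y ∂m'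
      rw [hm, hm', integral_map hcm.aemeasurable (map_continuous _).aestronglyMeasurable,
        integral_map hcm.aemeasurable (map_continuous _).aestronglyMeasurable]
      have : ∀ x : ℝ, (fourier n (c x) : ℂ) = Complex.exp (2 * Real.pi * Complex.I * n * x) := by
        intro x
        rw [hcdef]
        rw [fourier_coe_apply]
        norm_num
      simp_rw [this]
      exact hFZ n
    have hspan : (Submodule.span ℂ (Set.range (@fourier 1)) : Set C(AddCircle (1:ℝ), ℂ))
        ⊆ {f | ∫ y, f y ∂m = ∫ y, f y ∂m'} := by
      have := Submodule.span_le.mpr (fun x hx => by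
        obtain ⟨n, rfl⟩ := hx
        exact hfour n : Set.range (@fourier 1) ⊆ S)
      exact this
    intro f
    have hf : f ∈ closure (Submodule.span ℂ (Set.range (@fourier 1)) : Set C(AddCircle (1:ℝ), ℂ)) := by
      have := span_fourier_closure_eq_top (T := 1)
      have : f ∈ (Submodule.span ℂ (Set.range (@fourier 1))).topologicalClosure := by
        rw [this]; trivial
      rw [← Submodule.topologicalClosure_coe]; exact this
    have := closure_mono hspan hf
    rwa [hSc.closure_eq] at this
  -- conclude m = m'
  have hmm' : m = m' := by
    apply ext_of_forall_lintegral_eq_of_IsFiniteMeasure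
    intro f
    have hgc : Continuous fun y => ((f y : ℝ) : ℝ) := NNReal.continuous_coe.comp f.continuous
    set gC : C(AddCircle (1:ℝ), ℂ) := ⟨fun y => ((f y : ℝ) : ℂ), by continuity⟩ with hgC
    have h1 := hall gC
    have h2 : ∀ (κ : Measure (AddCircle (1:ℝ))), ∫ y, gC y ∂κ = ((∫ y, ((f y : ℝ)) ∂κ : ℝ) : ℂ) := by
      intro κ
      rw [hgC]
      exact integral_ofReal
    rw [h2, h2] at h1
    have h3 : (∫ y, ((f y : ℝ)) ∂m : ℝ) = ∫ y, ((f y : ℝ)) ∂m' := by exact_mod_cast h1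
    have hInt : ∀ (κ : Measure (AddCircle (1:ℝ))) [IsFiniteMeasure κ],
        Integrable (fun y => ((f y : ℝ))) κ := by
      intro κ _
      exact (BoundedContinuousFunction.mkOfCompact ⟨fun y => ((f y : ℝ)), hgc⟩).integrable κ
    rw [lintegral_coe_eq_integral _ (hInt m), lintegral_coe_eq_integral _ (hInt m'), h3]
  -- recover lam = lam'
  set g : AddCircle (1:ℝ) → ℝ := fun y => (AddCircle.equivIco 1 0 y : ℝ) with hgdef
  have hgm : Measurable g := by
    have : g = Subtype.val ∘ (AddCircle.measurableEquivIco (T := 1) 0) := rfl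
    rw [this]
    exact measurable_subtype_coe.comp (AddCircle.measurableEquivIco (T := 1) 0).measurable
  have hback : ∀ (κ : Measure ℝ), κ (Set.Ico (0:ℝ) 1)ᶜ = 0 → (κ.map c).map g = κ := by
    intro κ hκ
    rw [Measure.map_map hgm hcm]
    have hid : g ∘ c =ᵐ[κ] id := by
      have hae : ∀ᵐ x ∂κ, x ∈ Set.Ico (0:ℝ) 1 := by
        rw [ae_iff]
        convert hκ using 2
        rfl
      filter_upwards [hae] with x hx
      show ((AddCircle.equivIco (1:ℝ) 0 (QuotientAddGroup.mk x)) : ℝ) = x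
      rw [AddCircle.coe_equivIco_mk_apply]
      simp [Int.fract_eq_self.mpr ⟨hx.1, hx.2⟩]
    rw [Measure.map_congr hid, Measure.map_id]
  calc lam = (lam.map c).map g := (hback lam hc).symm
    _ = (lam'.map c).map g := by rw [← hm, ← hm', hmm']
    _ = lam' := hback lam' hc'

lemma aux_fourier_eq
    (μ : Measure ℝ) [IsProbabilityMeasure μ]
    (η η' : ℝ) (hη0 : 0 < η)
    (lam lam' : Measure ℝ)
    [IsProbabilityMeasure lam] [IsProbabilityMeasure lam']
    (hμlam : μ ≪ lam) (hμlam' : μ ≪ lam')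
    (elam : ℕ → Lp ℂ 2 lam)
    (helam : ∀ n : ℕ, (elam n : ℝ → ℂ) =ᵐ[lam]
      fun x => Complex.exp (2 * Real.pi * Complex.I * n * x))
    (elam' : ℕ → Lp ℂ 2 lam')
    (helam' : ∀ n : ℕ, (elam' n : ℝ → ℂ) =ᵐ[lam']
      fun x => Complex.exp (2 * Real.pi * Complex.I * n * x))
    (h : ℕ → Lp ℂ 2 lam)
    (hh0 : h 0 = elam 0)
    (hh : ∀ n : ℕ, h (n + 1) =
      elam (n + 1) - ∑ i ∈ Finset.range (n + 1), (inner ℂ (elam i) (elam (n + 1)) : ℂ) • h i)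
    (h' : ℕ → Lp ℂ 2 lam')
    (hh'0 : h' 0 = elam' 0)
    (hh' : ∀ n : ℕ, h' (n + 1) =
      elam' (n + 1) - ∑ i ∈ Finset.range (n + 1), (inner ℂ (elam' i) (elam' (n + 1)) : ℂ) • h' i)
    (hcon : ∀ n : ℕ, ((fun x => (η : ℂ) * (h n : ℝ → ℂ) x) =ᵐ[μ]
      fun x => (η' : ℂ) * (h' n : ℝ → ℂ) x)) :
    ∀ n : ℕ, ∫ x, Complex.exp (2 * Real.pi * Complex.I * n * x) ∂lam
      = ∫ x, Complex.exp (2 * Real.pi * Complex.I * n * x) ∂lam' := by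
  classical
  set E : ℕ → ℝ → ℂ := fun n x => Complex.exp (2 * Real.pi * Complex.I * n * x) with hE
  -- constants equal a.e. implies equal
  have const_eq : ∀ c c' : ℂ, ((fun _ : ℝ => c) =ᵐ[μ] fun _ => c') → c = c' := by
    intro c c' hcc
    by_contra hne2
    have h0 : μ {x : ℝ | ¬ (fun _ : ℝ => c) x = (fun _ : ℝ => c') x} = 0 := by
      rw [Filter.EventuallyEq, ae_iff] at hcc; exact hcc
    have huniv : {x : ℝ | ¬ (fun _ : ℝ => c) x = (fun _ : ℝ => c') x} = Set.univ := by
      ext x; simp [hne2]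
    rw [huniv, measure_univ] at h0
    exact one_ne_zero h0
  -- product of exponentials
  have Emul : ∀ (i j : ℕ), i ≤ j → ∀ x : ℝ,
      (starRingEnd ℂ) (E i x) * E j x = E (j - i) x := by
    intro i j hij x
    rw [hE]
    simp only [← Complex.exp_conj, map_mul, Complex.conj_I, Complex.conj_ofReal,
      Complex.conj_natCast, map_ofNat, ← Complex.exp_add]
    congr 1
    have hc : ((j - i : ℕ) : ℂ) = (j : ℂ) - i := by
      push_cast [Nat.cast_sub hij]; ring
    rw [hc]; ring
  -- inner products as integrals
  have hinnerf : ∀ (mm : Measure ℝ) (f g : Lp ℂ 2 mm) (F G : ℝ → ℂ),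
      (⇑f =ᵐ[mm] F) → (⇑g =ᵐ[mm] G) →
      (inner ℂ f g : ℂ) = ∫ x, (starRingEnd ℂ) (F x) * G x ∂mm := by
    intro mm f g F G hf hg
    rw [MeasureTheory.L2.inner_def]
    apply integral_congr_ae
    filter_upwards [hf, hg] with x h1 h2
    rw [RCLike.inner_apply, h1, h2, mul_comm]
  -- h 0 is a.e. 1
  have hp0lam : ⇑(h 0) =ᵐ[lam] fun _ : ℝ => (1:ℂ) := by
    rw [hh0]
    filter_upwards [helam 0] with x hx
    rw [hx]; norm_num
  have hp0lam' : ⇑(h' 0) =ᵐ[lam'] fun _ : ℝ => (1:ℂ) := by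
    rw [hh'0]
    filter_upwards [helam' 0] with x hx
    rw [hx]; norm_num
  -- η = η'
  have hηeq : (η : ℂ) = (η' : ℂ) := by
    apply const_eq
    have h1 : (fun x => (η : ℂ) * (h 0 : ℝ → ℂ) x) =ᵐ[μ] fun _ : ℝ => (η : ℂ) := by
      filter_upwards [hp0lam.filter_mono hμlam.ae_le] with x hx
      rw [hx]; ring
    have h2 : (fun x => (η' : ℂ) * (h' 0 : ℝ → ℂ) x) =ᵐ[μ] fun _ : ℝ => (η' : ℂ) := by
      filter_upwards [hp0lam'.filter_mono hμlam'.ae_le] with x hx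
      rw [hx]; ring
    exact (h1.symm.trans (hcon 0)).trans h2
  have hηne : (η : ℂ) ≠ 0 := by
    simp only [ne_eq, Complex.ofReal_eq_zero]; exact ne_of_gt hη0
  -- h n = h' n a.e. μ
  have hhh : ∀ n : ℕ, ⇑(h n) =ᵐ[μ] ⇑(h' n) := by
    intro n
    filter_upwards [hcon n] with x hx
    rw [← hηeq] at hx
    exact mul_left_cancel₀ hηne hx
  -- main induction
  have key : ∀ n : ℕ, (∫ x, E n x ∂lam = ∫ x, E n x ∂lam') ∧
      ∃ p : ℝ → ℂ, (⇑(h n) =ᵐ[lam] p) ∧ (⇑(h' n) =ᵐ[lam'] p) := by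
    intro n
    induction n using Nat.strong_induction_on with
    | _ n ih =>
      match n with
      | 0 =>
        constructor
        · have e0 : E 0 = fun _ : ℝ => (1:ℂ) := by funext x; rw [hE]; norm_num
          rw [e0]
          simp [measure_univ]
        · exact ⟨fun _ => (1:ℂ), hp0lam, hp0lam'⟩
      | Nat.succ n =>
        have hpex : ∀ i : ℕ, i < n + 1 →
            ∃ p : ℝ → ℂ, (⇑(h i) =ᵐ[lam] p) ∧ (⇑(h' i) =ᵐ[lam'] p) :=
          fun i hi => (ih i hi).2
        set p : ℕ → ℝ → ℂ := fun i =>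
          if hi : i < n + 1 then (hpex i hi).choose else 0 with hpdef
        have hp1 : ∀ i (hi : i < n + 1), ⇑(h i) =ᵐ[lam] p i := by
          intro i hi; rw [hpdef]; simp only [dif_pos hi]; exact (hpex i hi).choose_spec.1
        have hp2 : ∀ i (hi : i < n + 1), ⇑(h' i) =ᵐ[lam'] p i := by
          intro i hi; rw [hpdef]; simp only [dif_pos hi]; exact (hpex i hi).choose_spec.2
        have hinL : ∀ i ∈ Finset.range (n+1),
            (inner ℂ (elam i) (elam (n+1)) : ℂ) = ∫ y, E (n+1-i) y ∂lam := by
          intro i hi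
          have hi' := Finset.mem_range.mp hi
          rw [hinnerf lam _ _ (E i) (E (n+1)) (helam i) (helam (n+1))]
          exact integral_congr_ae (Eventually.of_forall fun x =>
            Emul i (n+1) (by omega) x)
        have hinL' : ∀ i ∈ Finset.range (n+1),
            (inner ℂ (elam' i) (elam' (n+1)) : ℂ) = ∫ y, E (n+1-i) y ∂lam' := by
          intro i hi
          have hi' := Finset.mem_range.mp hi
          rw [hinnerf lam' _ _ (E i) (E (n+1)) (helam' i) (helam' (n+1))]
          exact integral_congr_ae (Eventually.of_forall fun x =>
            Emul i (n+1) (by omega) x)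
        set q : ℝ → ℂ := fun x => E (n+1) x
            - ∑ i ∈ Finset.range (n+1), (∫ y, E (n+1-i) y ∂lam) * p i x with hqdef
        set q' : ℝ → ℂ := fun x => E (n+1) x
            - ∑ i ∈ Finset.range (n+1), (∫ y, E (n+1-i) y ∂lam') * p i x with hq'def
        have hterm : ∀ᵐ x ∂lam, ∀ i ∈ Finset.range (n+1),
            ⇑((inner ℂ (elam i) (elam (n+1)) : ℂ) • h i) x
              = (∫ y, E (n+1-i) y ∂lam) * p i x := by
          rw [Filter.eventually_all_finset]
          intro i hi
          filter_upwards [Lp.coeFn_smul ((inner ℂ (elam i) (elam (n+1)) : ℂ)) (h i),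
            hp1 i (Finset.mem_range.mp hi)] with x h1 h2
          rw [h1]
          simp only [Pi.smul_apply, smul_eq_mul]
          rw [h2, hinL i hi]
        have hterm' : ∀ᵐ x ∂lam', ∀ i ∈ Finset.range (n+1),
            ⇑((inner ℂ (elam' i) (elam' (n+1)) : ℂ) • h' i) x
              = (∫ y, E (n+1-i) y ∂lam') * p i x := by
          rw [Filter.eventually_all_finset]
          intro i hi
          filter_upwards [Lp.coeFn_smul ((inner ℂ (elam' i) (elam' (n+1)) : ℂ)) (h' i),
            hp2 i (Finset.mem_range.mp hi)] with x h1 h2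
          rw [h1]
          simp only [Pi.smul_apply, smul_eq_mul]
          rw [h2, hinL' i hi]
        have hq : ⇑(h (n+1)) =ᵐ[lam] q := by
          rw [hh n]
          filter_upwards [Lp.coeFn_sub (elam (n+1))
              (∑ i ∈ Finset.range (n+1), (inner ℂ (elam i) (elam (n+1)) : ℂ) • h i),
            coeFn_finset_sum (Finset.range (n+1))
              (fun i => (inner ℂ (elam i) (elam (n+1)) : ℂ) • h i),
            hterm, helam (n+1)] with x h1 h2 h3 h4
          simp only [Pi.sub_apply] at h1
          rw [h1, h4, h2, hqdef]
          exact congrArg _ (Finset.sum_congr rfl h3)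
        have hq' : ⇑(h' (n+1)) =ᵐ[lam'] q' := by
          rw [hh' n]
          filter_upwards [Lp.coeFn_sub (elam' (n+1))
              (∑ i ∈ Finset.range (n+1), (inner ℂ (elam' i) (elam' (n+1)) : ℂ) • h' i),
            coeFn_finset_sum (Finset.range (n+1))
              (fun i => (inner ℂ (elam' i) (elam' (n+1)) : ℂ) • h' i),
            hterm', helam' (n+1)] with x h1 h2 h3 h4
          simp only [Pi.sub_apply] at h1
          rw [h1, h4, h2, hq'def]
          exact congrArg _ (Finset.sum_congr rfl h3)
        have hqq' : q =ᵐ[μ] q' :=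
          ((hq.filter_mono hμlam.ae_le).symm.trans (hhh (n+1))).trans
            (hq'.filter_mono hμlam'.ae_le)
        have hp0μ : (fun _ : ℝ => (1:ℂ)) =ᵐ[μ] p 0 :=
          (((hp1 0 (by omega)).symm.trans hp0lam).symm.filter_mono hμlam.ae_le)
        have hc0 : ∫ y, E (n+1) y ∂lam = ∫ y, E (n+1) y ∂lam' := by
          apply const_eq
          filter_upwards [hqq', hp0μ] with x h1 h2
          rw [hqdef, hq'def] at h1
          simp only [] at h1
          rw [Finset.sum_range_succ', Finset.sum_range_succ'] at h1
          have hs : ∑ i ∈ Finset.range n, (∫ y, E (n+1-(i+1)) y ∂lam) * p (i+1) x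
              = ∑ i ∈ Finset.range n, (∫ y, E (n+1-(i+1)) y ∂lam') * p (i+1) x :=
            Finset.sum_congr rfl fun i hi => by rw [(ih (n+1-(i+1)) (by omega)).1]
          rw [hs, sub_right_inj] at h1
          have h3 := add_left_cancel h1
          rw [Nat.sub_zero] at h3
          rw [← h2] at h3
          simpa using h3
        refine ⟨hc0, q, hq, ?_⟩
        have hqeq : q' = q := by
          funext x
          rw [hqdef, hq'def]
          simp only []
          congr 1
          apply Finset.sum_congr rfl
          intro i hi
          rcases Nat.eq_zero_or_pos i with rfl | hpos
          · rw [Nat.sub_zero, hc0]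
          · rw [(ih (n+1-i) (by omega)).1]
        rw [← hqeq]
        exact hq'
  intro n
  exact (key n).1



/-- Let `μ` be a singular Borel probability measure on `[0,1)`, and let
`ν, ν′` be Borel probability measures on `[0,1)`, each singular with respect to Lebesgue
measure and mutually singular with `μ`.  For `0 < η, η′ ≤ 1` set `λ = ημ + (1-η)ν` and
`λ′ = η′μ + (1-η′)ν′`, and let `{h_n}`, `{h′_n}` be the Kaczmarz auxiliary sequences of the
exponentials in `L²(λ)` and `L²(λ′)`.  If `λ ≠ λ′`, then the sequences `{η h_n}` and
`{η′ h′_n}` are distinct as sequences in `L²(μ)`: there is an `n` with `η h_n ≠ η′ h′_n`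
`μ`-a.e. -/
theorem perturbed_sequences_distinct
    (μ ν ν' : Measure ℝ)
    [IsProbabilityMeasure μ] [IsProbabilityMeasure ν] [IsProbabilityMeasure ν']
    (hμsupp : μ (Set.Ico (0 : ℝ) 1)ᶜ = 0)
    (hνsupp : ν (Set.Ico (0 : ℝ) 1)ᶜ = 0)
    (hν'supp : ν' (Set.Ico (0 : ℝ) 1)ᶜ = 0)
    (hμsing : μ.MutuallySingular MeasureTheory.volume)
    (hνsing : ν.MutuallySingular MeasureTheory.volume)
    (hν'sing : ν'.MutuallySingular MeasureTheory.volume)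
    (hμν : ν.MutuallySingular μ) (hμν' : ν'.MutuallySingular μ)
    (η η' : ℝ) (hη0 : 0 < η) (hη1 : η ≤ 1) (hη'0 : 0 < η') (hη'1 : η' ≤ 1)
    (lam lam' : Measure ℝ)
    (hlam : lam = ENNReal.ofReal η • μ + ENNReal.ofReal (1 - η) • ν)
    (hlam' : lam' = ENNReal.ofReal η' • μ + ENNReal.ofReal (1 - η') • ν')
    (elam : ℕ → Lp ℂ 2 lam)
    (helam : ∀ n : ℕ, (elam n : ℝ → ℂ) =ᵐ[lam]
      fun x => Complex.exp (2 * Real.pi * Complex.I * n * x))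
    (elam' : ℕ → Lp ℂ 2 lam')
    (helam' : ∀ n : ℕ, (elam' n : ℝ → ℂ) =ᵐ[lam']
      fun x => Complex.exp (2 * Real.pi * Complex.I * n * x))
    (h : ℕ → Lp ℂ 2 lam)
    (hh0 : h 0 = elam 0)
    (hh : ∀ n : ℕ, h (n + 1) =
      elam (n + 1) - ∑ i ∈ Finset.range (n + 1), (inner ℂ (elam i) (elam (n + 1)) : ℂ) • h i)
    (h' : ℕ → Lp ℂ 2 lam')
    (hh'0 : h' 0 = elam' 0)
    (hh' : ∀ n : ℕ, h' (n + 1) =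
      elam' (n + 1) - ∑ i ∈ Finset.range (n + 1), (inner ℂ (elam' i) (elam' (n + 1)) : ℂ) • h' i)
    (hne : lam ≠ lam') :
    ∃ n : ℕ, ¬ ((fun x => (η : ℂ) * (h n : ℝ → ℂ) x) =ᵐ[μ]
      fun x => (η' : ℂ) * (h' n : ℝ → ℂ) x) := by
  by_contra hcontra
  push_neg at hcontra
  haveI hlamP : IsProbabilityMeasure lam := by
    constructor
    rw [hlam]
    simp only [Measure.coe_add, Pi.add_apply, Measure.smul_apply, smul_eq_mul,
      measure_univ, mul_one]
    rw [← ENNReal.ofReal_add hη0.le (by linarith)]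
    norm_num
  haveI hlam'P : IsProbabilityMeasure lam' := by
    constructor
    rw [hlam']
    simp only [Measure.coe_add, Pi.add_apply, Measure.smul_apply, smul_eq_mul,
      measure_univ, mul_one]
    rw [← ENNReal.ofReal_add hη'0.le (by linarith)]
    norm_num
  have hμlam : μ ≪ lam := by
    intro s hs
    rw [hlam] at hs
    simp only [Measure.coe_add, Pi.add_apply, Measure.smul_apply, smul_eq_mul] at hs
    rcases add_eq_zero.mp hs with ⟨h1, _⟩
    rcases mul_eq_zero.mp h1 with h3 | h4
    · exact absurd h3 (by simp only [ne_eq, ENNReal.ofReal_eq_zero, not_le]; linarith)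
    · exact h4
  have hμlam' : μ ≪ lam' := by
    intro s hs
    rw [hlam'] at hs
    simp only [Measure.coe_add, Pi.add_apply, Measure.smul_apply, smul_eq_mul] at hs
    rcases add_eq_zero.mp hs with ⟨h1, _⟩
    rcases mul_eq_zero.mp h1 with h3 | h4
    · exact absurd h3 (by simp only [ne_eq, ENNReal.ofReal_eq_zero, not_le]; linarith)
    · exact h4
  have hlamsupp : lam (Set.Ico (0:ℝ) 1)ᶜ = 0 := by
    rw [hlam]
    simp only [Measure.coe_add, Pi.add_apply, Measure.smul_apply, smul_eq_mul,
      hμsupp, hνsupp, mul_zero, add_zero]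
  have hlam'supp : lam' (Set.Ico (0:ℝ) 1)ᶜ = 0 := by
    rw [hlam']
    simp only [Measure.coe_add, Pi.add_apply, Measure.smul_apply, smul_eq_mul,
      hμsupp, hν'supp, mul_zero, add_zero]
  exact hne (aux_measure_ext lam lam' hlamsupp hlam'supp
    (aux_fourier_eq μ η η' hη0 lam lam' hμlam hμlam' elam helam elam' helam'
      h hh0 hh h' hh'0 hh' hcontra))
end

section
/- Let μ be a Borel probability measure on [0,1) with Cauchy integral F(z) = ∫₀¹ 1/(1 − z e^{−2πix}) dμ(x), and let α_n be the composition-sum coefficients determined by μ̂ (α_0 = 1 and α_n = Σ_{p ∈ P_n} (−1)^{l(p)} Π_{j=1}^{l(p)} μ̂(p_j) for n ≥ 1). Then for every z in the open unit disk, F(z) ≠ 0 and 1/F(z) = Σ_{n=0}^∞ α_n z^n. -/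
open MeasureTheory


lemma norm_exp_aux (t : ℝ) : ‖Complex.exp (-(2 * Real.pi * Complex.I * t))‖ = 1 := by
  have h : -(2 * (Real.pi:ℂ) * Complex.I * t) = ((-(2*Real.pi*t) : ℝ) : ℂ) * Complex.I := by
    push_cast; ring
  rw [h, Complex.norm_exp_ofReal_mul_I]

lemma int_exp_aux (μ : Measure ℝ) [IsProbabilityMeasure μ] (c : ℝ) :
    Integrable (fun x : ℝ => Complex.exp (-(2 * Real.pi * Complex.I * c * x))) μ := by
  refine ⟨(by fun_prop : Continuous fun x : ℝ => Complex.exp (-(2 * Real.pi * Complex.I * c * x))).aestronglyMeasurable,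
    HasFiniteIntegral.of_bounded (C := 1) (ae_of_all μ fun x => ?_)⟩
  have : -(2 * (Real.pi:ℂ) * Complex.I * c * x) = -(2 * (Real.pi:ℂ) * Complex.I * ((c*x:ℝ):ℂ)) := by
    push_cast; ring
  rw [this, norm_exp_aux (c*x)]

-- half-plane lemma
lemma re_inv_ge (w : ℂ) (hw : ‖w‖ < 1) : (1:ℝ)/2 ≤ ((1 - w)⁻¹).re := by
  have hw2 : Complex.normSq w < 1 := by
    have : Complex.normSq w = ‖w‖^2 := by
      rw [Complex.sq_norm]
    rw [this]
    nlinarith [norm_nonneg w]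
  have hne : (1:ℂ) - w ≠ 0 := by
    intro h
    rw [sub_eq_zero] at h
    rw [← h] at hw
    simp at hw
  have hpos : 0 < Complex.normSq (1 - w) := Complex.normSq_pos.mpr hne
  rw [Complex.inv_re, le_div_iff₀ hpos]
  have h1 : Complex.normSq (1 - w) = 1 - 2*w.re + Complex.normSq w := by
    simp [Complex.normSq_apply, Complex.sub_re, Complex.sub_im]; ring
  have h2 : ((1:ℂ) - w).re = 1 - w.re := by simp
  rw [h1, h2]
  have h3 : 0 ≤ w.re^2 + w.im^2 := by positivity
  have h4 : Complex.normSq w = w.re^2 + w.im^2 := by rw [Complex.normSq_apply]; ring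
  linarith

lemma F_hasSum
    (μ : Measure ℝ) [IsProbabilityMeasure μ]
    (μhat : ℝ → ℂ)
    (hμhat : ∀ x : ℝ, μhat x = ∫ y, Complex.exp (-(2 * Real.pi * Complex.I * x * y)) ∂μ)
    (F : ℂ → ℂ)
    (hF : ∀ z : ℂ, F z =
      ∫ x, (1 - z * Complex.exp (-(2 * Real.pi * Complex.I * x)))⁻¹ ∂μ)
    (z : ℂ) (hz : ‖z‖ < 1) :
    HasSum (fun n : ℕ => μhat n * z ^ n) (F z) := by
  set e : ℝ → ℂ := fun x => Complex.exp (-(2 * Real.pi * Complex.I * x)) with he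
  have hnorm_e : ∀ x : ℝ, ‖e x‖ = 1 := fun x => norm_exp_aux x
  have hterm : ∀ n : ℕ, (fun x : ℝ => (z * e x)^n)
      = fun x : ℝ => z^n * Complex.exp (-(2 * Real.pi * Complex.I * ((n:ℝ):ℂ) * x)) := by
    intro n
    funext x
    rw [mul_pow, he]
    congr 1
    rw [← Complex.exp_nat_mul]
    congr 1
    push_cast
    ring
  have hint : ∀ n : ℕ, Integrable (fun x : ℝ => (z * e x)^n) μ := by
    intro n
    rw [hterm n]
    exact (int_exp_aux μ n).const_mul _
  have hnormint : ∀ n : ℕ, ∫ x, ‖(z * e x)^n‖ ∂μ = ‖z‖^n := by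
    intro n
    have : (fun x : ℝ => ‖(z * e x)^n‖) = fun _ : ℝ => ‖z‖^n := by
      funext x
      rw [norm_pow, norm_mul, hnorm_e, mul_one]
    rw [this, integral_const]
    simp
  have hsummable : Summable fun n : ℕ => ∫ x, ‖(z * e x)^n‖ ∂μ := by
    simp only [hnormint]
    exact summable_geometric_of_lt_one (norm_nonneg z) hz
  have H := hasSum_integral_of_summable_integral_norm hint hsummable
  have h1 : (fun n : ℕ => ∫ x, (z * e x)^n ∂μ) = fun n : ℕ => μhat n * z^n := by
    funext n
    rw [hterm n, integral_const_mul, hμhat]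
    rw [mul_comm]
  have h2 : ∫ x, (∑' n : ℕ, (z * e x)^n) ∂μ = F z := by
    rw [hF]
    congr 1
    funext x
    have hlt : ‖z * e x‖ < 1 := by rw [norm_mul, hnorm_e, mul_one]; exact hz
    exact (hasSum_geometric_of_norm_lt_one hlt).tsum_eq
  rw [h1, h2] at H
  exact H

lemma F_ne_zero
    (μ : Measure ℝ) [IsProbabilityMeasure μ]
    (F : ℂ → ℂ)
    (hF : ∀ z : ℂ, F z =
      ∫ x, (1 - z * Complex.exp (-(2 * Real.pi * Complex.I * x)))⁻¹ ∂μ)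
    (z : ℂ) (hz : ‖z‖ < 1) : F z ≠ 0 := by
  set e : ℝ → ℂ := fun x => Complex.exp (-(2 * Real.pi * Complex.I * x)) with he
  have hnorm_e : ∀ x : ℝ, ‖e x‖ = 1 := fun x => norm_exp_aux x
  have hwlt : ∀ x : ℝ, ‖z * e x‖ < 1 := by
    intro x; rw [norm_mul, hnorm_e, mul_one]; exact hz
  have hne1 : ∀ x : ℝ, (1 : ℂ) - z * e x ≠ 0 := by
    intro x h
    rw [sub_eq_zero] at h
    have := hwlt x
    rw [← h] at this
    simp at this
  have hcont : Continuous fun x : ℝ => ((1 : ℂ) - z * e x)⁻¹ := by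
    apply Continuous.inv₀
    · fun_prop
    · exact hne1
  have hbound : ∀ x : ℝ, ‖((1 : ℂ) - z * e x)⁻¹‖ ≤ (1 - ‖z‖)⁻¹ := by
    intro x
    rw [norm_inv]
    have h1 : 1 - ‖z‖ ≤ ‖(1 : ℂ) - z * e x‖ := by
      have := norm_sub_norm_le (1 : ℂ) (z * e x)
      rw [norm_one, norm_mul, hnorm_e, mul_one] at this
      exact this
    have h2 : (0:ℝ) < 1 - ‖z‖ := by linarith
    exact inv_anti₀ h2 h1
  have hintf : Integrable (fun x : ℝ => ((1 : ℂ) - z * e x)⁻¹) μ :=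
    ⟨hcont.aestronglyMeasurable, HasFiniteIntegral.of_bounded (ae_of_all μ hbound)⟩
  have hhalf : (1:ℝ)/2 ≤ (F z).re := by
    rw [hF]
    rw [show ((∫ x, ((1:ℂ) - z * e x)⁻¹ ∂μ).re) = RCLike.re (∫ x, ((1:ℂ) - z * e x)⁻¹ ∂μ) from rfl]
    rw [← integral_re hintf]
    have hmono : ∫ x, (1:ℝ)/2 ∂μ ≤ ∫ x, RCLike.re (((1:ℂ) - z * e x)⁻¹) ∂μ := by
      apply integral_mono (integrable_const _) hintf.re
      intro x
      exact re_inv_ge (z * e x) (hwlt x)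
    calc (1:ℝ)/2 = ∫ _x, (1:ℝ)/2 ∂μ := by simp
    _ ≤ _ := hmono
  intro h
  rw [h] at hhalf
  simp at hhalf
  linarith

lemma ofScalars_radius_ge (c : ℕ → ℂ) (hc : ∀ n, ‖c n‖ ≤ 1) :
    1 ≤ (FormalMultilinearSeries.ofScalars ℂ c).radius := by
  apply FormalMultilinearSeries.le_radius_of_bound _ 1
  intro n
  rw [NNReal.coe_one, one_pow, mul_one]
  have hm : ‖ContinuousMultilinearMap.mkPiAlgebraFin ℂ n ℂ‖ ≤ 1 := by
    have := ContinuousMultilinearMap.norm_mkPiAlgebraFin_le (𝕜 := ℂ) (n := n) (A := ℂ)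
    simpa using this
  calc ‖FormalMultilinearSeries.ofScalars ℂ c n‖
      = ‖c n • ContinuousMultilinearMap.mkPiAlgebraFin ℂ n ℂ‖ := rfl
  _ ≤ ‖c n‖ * ‖ContinuousMultilinearMap.mkPiAlgebraFin ℂ n ℂ‖ :=
      ContinuousMultilinearMap.opNorm_smul_le _ _
  _ ≤ 1 * 1 := mul_le_mul (hc n) hm (norm_nonneg _) zero_le_one
  _ = 1 := one_mul 1

lemma hasFPS (c : ℕ → ℂ) (hc : ∀ n, ‖c n‖ ≤ 1) (f : ℂ → ℂ)
    (h : ∀ y : ℂ, ‖y‖ < 1 → HasSum (fun n => c n * y ^ n) (f y)) :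
    HasFPowerSeriesOnBall f (FormalMultilinearSeries.ofScalars ℂ c) 0 1 := by
  refine ⟨ofScalars_radius_ge c hc, zero_lt_one, ?_⟩
  intro y hy
  rw [mem_emetric_ball_zero_iff] at hy
  have hy' : ‖y‖ < 1 := by rw [← ENNReal.coe_one, enorm_lt_coe] at hy; exact_mod_cast hy
  rw [zero_add]
  have hfun : (fun n => FormalMultilinearSeries.ofScalars ℂ c n fun _ => y)
      = fun n => c n * y ^ n := by
    funext n
    rw [FormalMultilinearSeries.ofScalars_apply_eq, smul_eq_mul]
  rw [hfun]
  exact h y hy'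

lemma Q_hasFPS : HasFPowerSeriesOnBall (fun w : ℂ => (1 + w)⁻¹)
    (FormalMultilinearSeries.ofScalars ℂ (fun n => (-1 : ℂ) ^ n)) 0 1 := by
  apply hasFPS
  · intro n; rw [norm_pow, norm_neg, norm_one, one_pow]
  · intro y hy
    have h := hasSum_geometric_of_norm_lt_one (ξ := -y) (by rwa [norm_neg])
    rw [sub_neg_eq_add] at h
    have hfun : (fun n : ℕ => (-1:ℂ)^n * y^n) = fun n : ℕ => (-y)^n := by
      funext n
      rw [neg_pow y]
    rw [hfun]
    exact h

lemma comp_coeff (a' : ℕ → ℂ) (n : ℕ) :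
    ((FormalMultilinearSeries.ofScalars ℂ (fun m => (-1:ℂ) ^ m)).comp
      (FormalMultilinearSeries.ofScalars ℂ a')).coeff n
    = ∑ c : Composition n, (-1:ℂ) ^ c.length * (List.ofFn fun i => a' (c.blocksFun i)).prod := by
  rw [FormalMultilinearSeries.coeff]
  show ((∑ c : Composition n, _) : ContinuousMultilinearMap ℂ (fun _ : Fin n => ℂ) ℂ) _ = _
  rw [ContinuousMultilinearMap.sum_apply]
  apply Finset.sum_congr rfl
  intro c _
  rw [FormalMultilinearSeries.compAlongComposition_apply]
  simp only [FormalMultilinearSeries.ofScalars, ContinuousMultilinearMap.smul_apply,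
    ContinuousMultilinearMap.mkPiAlgebraFin_apply, smul_eq_mul]
  have happ : (FormalMultilinearSeries.ofScalars ℂ a').applyComposition c 1
      = fun i => a' (c.blocksFun i) := by
    funext i
    simp [FormalMultilinearSeries.applyComposition, FormalMultilinearSeries.ofScalars,
      Pi.one_def, Function.comp_def, List.ofFn_const]
  rw [happ]

lemma list_map_eq (g : ℝ → ℂ) (l : List ℕ) :
    (l.map fun q => g (q : ℝ)) = List.ofFn fun i : Fin l.length => g ((l.get i : ℕ) : ℝ) := by
  induction l with
  | nil => simp
  | cons b t ih => simp_all [List.ofFn_succ]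

lemma list_map_prod (g : ℝ → ℂ) (l : List ℕ) :
    (l.map fun q => g (q : ℝ)).prod = (List.ofFn fun i : Fin l.length => g ((l.get i : ℕ) : ℝ)).prod :=
  congrArg List.prod (list_map_eq g l)

/-- Let `μ` be a Borel probability measure on `[0,1)` with Cauchy integral
`F(z) = ∫₀¹ 1/(1 - z e^{-2πix}) dμ(x)` and composition-sum coefficients `α_0 = 1`,
`α_n = Σ_{p ∈ P_n} (-1)^{l(p)} Π_j μ̂(p_j)`.  Then for every `z` in the open unit disk,
`F(z) ≠ 0` and `1/F(z) = Σ_{n=0}^∞ α_n zⁿ`. -/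
theorem cauchy_integral_reciprocal_series
    (μ : Measure ℝ) [IsProbabilityMeasure μ]
    (hsupp : μ (Set.Ico (0 : ℝ) 1)ᶜ = 0)
    (μhat : ℝ → ℂ)
    (hμhat : ∀ x : ℝ, μhat x = ∫ y, Complex.exp (-(2 * Real.pi * Complex.I * x * y)) ∂μ)
    (α : ℕ → ℂ)
    (hα0 : α 0 = 1)
    (hα : ∀ n : ℕ, 0 < n → α n = ∑ p : Composition n,
      (-1 : ℂ) ^ p.length * (p.blocks.map fun q => μhat (q : ℝ)).prod)
    (F : ℂ → ℂ)
    (hF : ∀ z : ℂ, F z =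
      ∫ x, (1 - z * Complex.exp (-(2 * Real.pi * Complex.I * x)))⁻¹ ∂μ) :
    ∀ z : ℂ, ‖z‖ < 1 → F z ≠ 0 ∧ HasSum (fun n : ℕ => α n * z ^ n) (F z)⁻¹ := by

  have hμhat0 : μhat 0 = 1 := by
    rw [hμhat]; simp
  have hμnorm : ∀ n : ℕ, ‖μhat n‖ ≤ 1 := by
    intro n
    rw [hμhat]
    calc ‖∫ y, Complex.exp (-(2 * Real.pi * Complex.I * ((n:ℝ):ℂ) * y)) ∂μ‖
        ≤ ∫ y, ‖Complex.exp (-(2 * Real.pi * Complex.I * ((n:ℝ):ℂ) * y))‖ ∂μ :=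
          norm_integral_le_integral_norm _
    _ = 1 := by
        have hfun : (fun y : ℝ => ‖Complex.exp (-(2 * Real.pi * Complex.I * ((n:ℝ):ℂ) * y))‖)
            = fun _ : ℝ => (1:ℝ) := by
          funext y
          have harg : -(2 * (Real.pi:ℂ) * Complex.I * ((n:ℝ):ℂ) * y)
              = -(2 * (Real.pi:ℂ) * Complex.I * (((n:ℝ) * y : ℝ) : ℂ)) := by
            push_cast; ring
          rw [harg, norm_exp_aux]
        rw [hfun]
        simp
  have hF0 : F 0 = 1 := by
    rw [hF]; simp
  set a' : ℕ → ℂ := fun n => if n = 0 then 0 else μhat n with ha'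
  set pG := FormalMultilinearSeries.ofScalars ℂ a' with hpG
  set qS := FormalMultilinearSeries.ofScalars ℂ (fun m => (-1:ℂ)^m) with hqS
  have hGps : HasFPowerSeriesOnBall (fun z => F z - 1) pG 0 1 := by
    apply hasFPS
    · intro n
      by_cases h : n = 0
      · simp [ha', h]
      · simpa [ha', h] using hμnorm n
    · intro y hy
      have h := F_hasSum μ μhat hμhat F hF y hy
      have h2 := h.update 0 0
      have hupdate : Function.update (fun n : ℕ => μhat ↑n * y ^ n) 0 0
          = fun n => a' n * y ^ n := by
        funext n
        rcases n with _ | m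
        · simp [ha']
        · rw [Function.update_of_ne (Nat.succ_ne_zero m)]
          simp [ha']
      rw [hupdate] at h2
      have hval : (0 : ℂ) - (fun n : ℕ => μhat ↑n * y ^ n) 0 + F y = F y - 1 := by
        simp only [Nat.cast_zero, hμhat0, pow_zero, mul_one]
        ring
      rwa [hval] at h2
  have hcompAt : HasFPowerSeriesAt (fun z => (F z)⁻¹) (qS.comp pG) 0 := by
    have hg : HasFPowerSeriesAt (fun w : ℂ => (1 + w)⁻¹) qS ((fun z => F z - 1) 0) := by
      have h0 : (fun z : ℂ => F z - 1) 0 = 0 := by simp [hF0]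
      rw [h0]
      exact Q_hasFPS.hasFPowerSeriesAt
    have h := HasFPowerSeriesAt.comp (g := fun w : ℂ => (1 + w)⁻¹)
      (f := fun z => F z - 1) (x := (0:ℂ)) hg hGps.hasFPowerSeriesAt
    have hfun : ((fun w : ℂ => (1 + w)⁻¹) ∘ fun z => F z - 1) = fun z => (F z)⁻¹ := by
      funext z
      simp [Function.comp, add_sub_cancel]
    rwa [hfun] at h
  have hcoeff : ∀ n : ℕ, (qS.comp pG).coeff n = α n := by
    intro n
    rcases Nat.eq_zero_or_pos n with h0 | hpos
    · subst h0
      have h := hcompAt.coeff_zero (1 : Fin 0 → ℂ)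
      have : (qS.comp pG).coeff 0 = (qS.comp pG) 0 (1 : Fin 0 → ℂ) := rfl
      rw [this, h, hα0, hF0, inv_one]
    · rw [hα n hpos, comp_coeff]
      apply Finset.sum_congr rfl
      intro c _
      congr 1
      have hfn : (fun i : Fin c.length => a' (c.blocksFun i))
          = fun i : Fin c.length => μhat ((c.blocksFun i : ℕ) : ℝ) := by
        funext i
        rw [ha']
        simp only [if_neg (Nat.one_le_iff_ne_zero.mp (c.one_le_blocksFun i))]
      rw [hfn]
      exact (list_map_prod μhat c.blocks).symm
  intro z hz
  refine ⟨F_ne_zero μ F hF z hz, ?_⟩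
  set r : NNReal := ⟨(‖z‖ + 1)/2, by positivity⟩ with hr
  have hrz : ‖z‖ < (r : ℝ) := by
    rw [hr]; change ‖z‖ < (‖z‖ + 1)/2; linarith
  have hr1 : (r : ℝ) < 1 := by
    rw [hr]; change (‖z‖ + 1)/2 < (1:ℝ); linarith
  have hrpos : 0 < r := by
    rw [← NNReal.coe_lt_coe, NNReal.coe_zero]
    exact lt_of_le_of_lt (norm_nonneg z) hrz
  have hdiff : DifferentiableOn ℂ (fun w => (F w)⁻¹) (Metric.closedBall 0 (r : ℝ)) := by
    intro w hw
    have hw1 : ‖w‖ < 1 := by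
      rw [Metric.mem_closedBall, dist_zero_right] at hw
      linarith
    have hFdiff : DifferentiableAt ℂ F w := by
      have hmem : w ∈ EMetric.ball (0 : ℂ) 1 := by
        exact mem_emetric_ball_zero_iff.2 (by rw [← ENNReal.coe_one, enorm_lt_coe]; exact_mod_cast hw1)
      have hFps : HasFPowerSeriesOnBall F (FormalMultilinearSeries.ofScalars ℂ fun n => μhat n) 0 1 :=
        hasFPS _ hμnorm F (F_hasSum μ μhat hμhat F hF)
      exact (hFps.differentiableOn.differentiableAt (EMetric.isOpen_ball.mem_nhds hmem))
    exact ((hFdiff.inv (F_ne_zero μ F hF w hw1))).differentiableWithinAt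
  have hcb := hdiff.hasFPowerSeriesOnBall hrpos
  have heq : cauchyPowerSeries (fun w => (F w)⁻¹) 0 (r : ℝ) = qS.comp pG :=
    hcb.hasFPowerSeriesAt.eq_formalMultilinearSeries hcompAt
  have hs := hcb.hasSum (y := z)
    (by rw [mem_emetric_ball_zero_iff]; exact_mod_cast hrz)
  rw [heq] at hs
  simp only [zero_add] at hs
  have hterm : (fun n : ℕ => (qS.comp pG) n fun _ => z) = fun n : ℕ => α n * z ^ n := by
    funext n
    rw [FormalMultilinearSeries.apply_eq_pow_smul_coeff, hcoeff, smul_eq_mul, mul_comm]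
  rwa [hterm] at hs
end

section
/- Let μ be a singular Borel probability measure on [0,1), let {g_n}_{n≥0} be the Kaczmarz auxiliary sequence of the exponentials in L²(μ), and let f ∈ L²(μ). Then for every z in the open unit disk 𝔻, the normalized Cauchy transform satisfies V_μ f(z) = Σ_{n=0}^∞ ⟨f, g_n⟩ z^n, i.e., (∫₀¹ f(x)/(1 − z e^{−2πix}) dμ(x)) / (∫₀¹ 1/(1 − z e^{−2πix}) dμ(x)) = Σ_{n=0}^∞ ⟨f, g_n⟩ z^n. -/
open MeasureTheory Filter

open FormalMultilinearSeries
open scoped NNReal ENNReal ComplexConjugate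

namespace KaczmarzAux

lemma ofScalars_coeff (c : ℕ → ℂ) (n : ℕ) :
    (FormalMultilinearSeries.ofScalars ℂ c).coeff n = c n := by
  simp [FormalMultilinearSeries.coeff, FormalMultilinearSeries.ofScalars,
    List.prod_ofFn]

lemma norm_ofScalars (c : ℕ → ℂ) (n : ℕ) :
    ‖FormalMultilinearSeries.ofScalars ℂ c n‖ = ‖c n‖ := by
  rw [FormalMultilinearSeries.norm_apply_eq_norm_coef, ofScalars_coeff]

lemma mem_ball_of_norm {y : ℂ} {r : ℝ≥0} (hy : ‖y‖ < r) :
    y ∈ Metric.eball (0 : ℂ) (r : ℝ≥0∞) := by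
  rw [Metric.mem_eball, edist_zero_right]
  exact_mod_cast (by exact_mod_cast hy : ‖y‖₊ < r)

end KaczmarzAux

namespace KaczmarzAux

lemma hasSum_quot (a β b : ℕ → ℂ) (Ca Cβ : ℝ)
    (ha : ∀ n, ‖a n‖ ≤ Ca) (hβ : ∀ n, ‖β n‖ ≤ Cβ) (hβ0 : β 0 = 1)
    (hab : ∀ n, a n = ∑ i ∈ Finset.range (n + 1), β (n - i) * b i)
    (hD : ∀ w : ℂ, ‖w‖ < 1 → (∑' n, β n * w ^ n) ≠ 0)
    (z : ℂ) (hz : ‖z‖ < 1) :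
    HasSum (fun n => b n * z ^ n) ((∑' n, a n * z ^ n) / (∑' n, β n * z ^ n)) := by
  classical
  set pA := FormalMultilinearSeries.ofScalars ℂ a with hpA
  set pB := FormalMultilinearSeries.ofScalars ℂ β with hpB
  have hone : ((1 : ℝ≥0) : ℝ≥0∞) = 1 := by norm_num
  have hradA : 1 ≤ pA.radius := by
    rw [← hone]
    exact pA.le_radius_of_bound Ca fun n => by
      rw [norm_ofScalars]; simpa using ha n
  have hradB : 1 ≤ pB.radius := by
    rw [← hone]
    exact pB.le_radius_of_bound Cβ fun n => by
      rw [norm_ofScalars]; simpa using hβ n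
  have hA : HasFPowerSeriesOnBall pA.sum pA 0 1 :=
    (pA.hasFPowerSeriesOnBall (lt_of_lt_of_le zero_lt_one hradA)).mono zero_lt_one hradA
  have hB : HasFPowerSeriesOnBall pB.sum pB 0 1 :=
    (pB.hasFPowerSeriesOnBall (lt_of_lt_of_le zero_lt_one hradB)).mono zero_lt_one hradB
  have hmem1 : ∀ y : ℂ, ‖y‖ < 1 → y ∈ Metric.eball (0 : ℂ) 1 := fun y hy => by
    rw [← hone]; exact mem_ball_of_norm (by simpa using hy)
  have hsA : ∀ y : ℂ, ‖y‖ < 1 → HasSum (fun n => a n * y ^ n) (pA.sum y) := by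
    intro y hy
    have := hA.hasSum (hmem1 y hy)
    rw [zero_add] at this
    simpa [hpA, FormalMultilinearSeries.apply_eq_pow_smul_coeff, ofScalars_coeff,
      smul_eq_mul, mul_comm] using this
  have hsB : ∀ y : ℂ, ‖y‖ < 1 → HasSum (fun n => β n * y ^ n) (pB.sum y) := by
    intro y hy
    have := hB.hasSum (hmem1 y hy)
    rw [zero_add] at this
    simpa [hpB, FormalMultilinearSeries.apply_eq_pow_smul_coeff, ofScalars_coeff,
      smul_eq_mul, mul_comm] using this
  have hDne : ∀ y ∈ Metric.ball (0 : ℂ) 1, pB.sum y ≠ 0 := by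
    intro y hy
    have hy' : ‖y‖ < 1 := by simpa [Metric.mem_ball, dist_zero_right] using hy
    rw [← (hsB y hy').tsum_eq]
    exact hD y hy'
  -- differentiability of the quotient on the unit ball
  have hdiffA : DifferentiableOn ℂ pA.sum (Metric.ball 0 1) := by
    intro y hy
    have hy' : ‖y‖ < 1 := by simpa [Metric.mem_ball, dist_zero_right] using hy
    exact ((hA.analyticAt_of_mem (hmem1 y hy')).differentiableAt).differentiableWithinAt
  have hdiffB : DifferentiableOn ℂ pB.sum (Metric.ball 0 1) := by
    intro y hy
    have hy' : ‖y‖ < 1 := by simpa [Metric.mem_ball, dist_zero_right] using hy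
    exact ((hB.analyticAt_of_mem (hmem1 y hy')).differentiableAt).differentiableWithinAt
  have hdiffh : DifferentiableOn ℂ (fun y => pA.sum y / pB.sum y) (Metric.ball 0 1) :=
    hdiffA.div hdiffB hDne
  -- choose a radius `r` with `‖z‖ < r < 1`
  obtain ⟨r, hzr, hr1⟩ : ∃ r : ℝ≥0, ‖z‖ < r ∧ (r : ℝ) < 1 := by
    refine ⟨⟨(‖z‖ + 1) / 2, by positivity⟩, ?_, ?_⟩ <;>
      · erw [NNReal.coe_mk]; linarith
  have hr0 : (0 : ℝ≥0) < r := lt_of_le_of_lt (by positivity : (0:ℝ≥0) ≤ ‖z‖₊) (by exact_mod_cast hzr)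
  have hsub : Metric.closedBall (0 : ℂ) r ⊆ Metric.ball 0 1 := by
    intro y hy
    rw [Metric.mem_closedBall, dist_zero_right] at hy
    rw [Metric.mem_ball, dist_zero_right]
    exact lt_of_le_of_lt hy hr1
  have H : HasFPowerSeriesOnBall (fun y => pA.sum y / pB.sum y)
      (cauchyPowerSeries (fun y => pA.sum y / pB.sum y) 0 r) 0 r :=
    (hdiffh.mono hsub).hasFPowerSeriesOnBall hr0
  set q := cauchyPowerSeries (fun y => pA.sum y / pB.sum y) 0 r with hq
  set c := q.coeff with hc
  have hsq : ∀ y : ℂ, ‖y‖ < r → HasSum (fun n => c n * y ^ n)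
      (pA.sum y / pB.sum y) := by
    intro y hy
    have := H.hasSum (mem_ball_of_norm hy)
    rw [zero_add] at this
    simpa [FormalMultilinearSeries.apply_eq_pow_smul_coeff, smul_eq_mul, mul_comm] using this
  have hsummq : ∀ y : ℂ, ‖y‖ < r → Summable (fun n => ‖c n * y ^ n‖) := by
    intro y hy
    have hrad : (‖y‖₊ : ℝ≥0∞) < q.radius :=
      lt_of_lt_of_le (by exact_mod_cast (by exact_mod_cast hy : ‖y‖₊ < r)) H.r_le
    have := q.summable_norm_mul_pow hrad
    simpa [norm_mul, norm_pow, FormalMultilinearSeries.norm_apply_eq_norm_coef] using this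
  have hsummβ : ∀ y : ℂ, ‖y‖ < 1 → Summable (fun n => ‖β n * y ^ n‖) := by
    intro y hy
    refine Summable.of_nonneg_of_le (fun n => norm_nonneg _) (fun n => ?_)
      (((summable_geometric_of_lt_one (norm_nonneg y) hy)).mul_left Cβ)
    rw [norm_mul, norm_pow]
    exact mul_le_mul_of_nonneg_right (hβ n) (by positivity)
  -- the Cauchy product coefficients
  set u : ℕ → ℂ := fun n => ∑ i ∈ Finset.range (n + 1), c i * β (n - i) with hu_def
  have heq : ∀ (y : ℂ) (n : ℕ),
      (∑ k ∈ Finset.range (n + 1), (c k * y ^ k) * (β (n - k) * y ^ (n - k))) = u n * y ^ n := by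
    intro y n
    rw [hu_def, Finset.sum_mul]
    refine Finset.sum_congr rfl fun k hk => ?_
    have hk' : k ≤ n := Finset.mem_range_succ_iff.mp hk
    rw [mul_mul_mul_comm, ← pow_add]
    congr 2
    omega
  have hu : ∀ y : ℂ, ‖y‖ < r →
      HasSum (fun n => u n * y ^ n) (pA.sum y / pB.sum y * pB.sum y) := by
    intro y hy
    have hy1 : ‖y‖ < 1 := hy.trans hr1
    have h1 := hsummq y hy
    have h2 := hsummβ y hy1
    have hs := summable_norm_sum_mul_range_of_summable_norm h1 h2
    have hs2 : Summable (fun n => u n * y ^ n) := (hs.of_norm).congr (heq y)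
    have ht2 : ∑' n, u n * y ^ n = pA.sum y / pB.sum y * pB.sum y := by
      rw [← (hsq y hy).tsum_eq, ← (hsB y hy1).tsum_eq,
        tsum_mul_tsum_eq_tsum_sum_range_of_summable_norm h1 h2]
      exact (tsum_congr (heq y)).symm
    exact ht2 ▸ hs2.hasSum
  -- radius bound for the product series
  set x0 : ℝ := (r : ℝ) / 2 with hx0
  have hr20 : (0:ℝ) < x0 := by positivity
  have hyr2 : ‖(x0 : ℂ)‖ < r := by
    rw [Complex.norm_real, Real.norm_of_nonneg hr20.le, hx0]
    linarith [hr0]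
  have hsumu : Summable (fun n => ‖u n‖ * x0 ^ n) := by
    have h1 := hsummq (x0 : ℂ) hyr2
    have h2 := hsummβ (x0 : ℂ) (hyr2.trans hr1)
    have hs := (summable_norm_sum_mul_range_of_summable_norm h1 h2)
    refine hs.congr fun n => ?_
    rw [heq (x0 : ℂ) n, norm_mul, norm_pow, Complex.norm_real,
      Real.norm_of_nonneg hr20.le]
  set r2 : ℝ≥0 := r / 2 with hr2
  have hrad_u : (r2 : ℝ≥0∞) ≤ (FormalMultilinearSeries.ofScalars ℂ u).radius := by
    refine FormalMultilinearSeries.le_radius_of_summable _ ?_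
    refine hsumu.congr fun n => ?_
    rw [norm_ofScalars]
    have : (r2 : ℝ) = x0 := by simp [hx0, hr2, NNReal.coe_div]
    rw [this]
  have hr2r : (r2 : ℝ) < r := by
    simp only [hr2, NNReal.coe_div]
    push_cast
    linarith [hr0]
  have hFP : HasFPowerSeriesOnBall (fun y => pA.sum y / pB.sum y * pB.sum y)
      (FormalMultilinearSeries.ofScalars ℂ u) 0 r2 := by
    refine ⟨hrad_u, ?_, ?_⟩
    · exact_mod_cast (by positivity : (0:ℝ≥0) < r / 2)
    · intro y hy
      have hy' : ‖y‖ < (r2 : ℝ) := by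
        rw [Metric.mem_eball, edist_zero_right] at hy
        exact_mod_cast (by exact_mod_cast hy : ‖y‖₊ < r2)
      rw [zero_add]
      have := hu y (hy'.trans hr2r)
      refine this.congr_fun fun n => ?_
      rw [FormalMultilinearSeries.apply_eq_pow_smul_coeff, ofScalars_coeff, smul_eq_mul,
        mul_comm]
  -- identify the coefficients via uniqueness of power series
  have heqfun : ∀ᶠ y in nhds (0 : ℂ), pA.sum y / pB.sum y * pB.sum y = pA.sum y := by
    filter_upwards [Metric.ball_mem_nhds (0 : ℂ) one_pos] with y hy
    exact div_mul_cancel₀ _ (hDne y hy)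
  have hseq : FormalMultilinearSeries.ofScalars ℂ u = pA :=
    hFP.hasFPowerSeriesAt.eq_formalMultilinearSeries_of_eventually hA.hasFPowerSeriesAt heqfun
  have hcoef : ∀ n, u n = a n := by
    intro n
    have := congrArg (fun p => FormalMultilinearSeries.coeff p n) hseq
    simpa [ofScalars_coeff, hpA] using this
  -- conclude `c = b` by strong induction
  have hcb : ∀ n, c n = b n := by
    intro n
    induction n using Nat.strong_induction_on with
    | _ n ih =>
      have h1 : ∑ i ∈ Finset.range (n + 1), c i * β (n - i)
          = ∑ i ∈ Finset.range (n + 1), β (n - i) * b i :=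
        (hcoef n).trans (hab n)
      rw [Finset.sum_range_succ, Finset.sum_range_succ] at h1
      have hrest : ∑ i ∈ Finset.range n, c i * β (n - i)
          = ∑ i ∈ Finset.range n, β (n - i) * b i :=
        Finset.sum_congr rfl fun i hi => by
          rw [ih i (Finset.mem_range.mp hi), mul_comm]
      rw [hrest, Nat.sub_self, hβ0, mul_one, one_mul] at h1
      exact add_left_cancel h1
  have hfin := hsq z hzr
  rw [(hsA z hz).tsum_eq, (hsB z hz).tsum_eq]
  exact hfin.congr_fun fun n => by rw [hcb n]

end KaczmarzAux

namespace KaczmarzAux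

lemma norm_exp_I_mul (t : ℝ) : ‖Complex.exp (-(2 * Real.pi * Complex.I * t))‖ = 1 := by
  rw [Complex.norm_exp]
  have : (-(2 * (Real.pi:ℂ) * Complex.I * (t:ℂ))).re = 0 := by
    simp [Complex.mul_re, Complex.mul_im]
  rw [this, Real.exp_zero]

lemma continuous_w (z : ℂ) :
    Continuous fun x : ℝ => z * Complex.exp (-(2 * Real.pi * Complex.I * x)) := by
  refine continuous_const.mul (Complex.continuous_exp.comp ?_)
  exact ((continuous_const.mul Complex.continuous_ofReal)).neg

lemma hasSum_integral (μ : Measure ℝ) [IsFiniteMeasure μ] (φ : ℝ → ℂ) (hφ : Integrable φ μ)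
    (z : ℂ) (hz : ‖z‖ < 1) :
    HasSum
      (fun n : ℕ =>
        (∫ x, Complex.exp (-(2 * Real.pi * Complex.I * n * x)) * φ x ∂μ) * z ^ n)
      (∫ x, φ x * (1 - z * Complex.exp (-(2 * Real.pi * Complex.I * x)))⁻¹ ∂μ) := by
  set w : ℝ → ℂ := fun x => z * Complex.exp (-(2 * Real.pi * Complex.I * x)) with hw
  have hwn : ∀ x : ℝ, ‖w x‖ = ‖z‖ := by
    intro x
    rw [hw]
    simp only [norm_mul, norm_exp_I_mul, mul_one]
  have hw1 : ∀ x, ‖w x‖ < 1 := fun x => by rw [hwn]; exact hz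
  have hcont : Continuous w := continuous_w z
  set F : ℕ → ℝ → ℂ := fun n x => w x ^ n * φ x with hF
  have hFint : ∀ n, Integrable (F n) μ := by
    intro n
    refine Integrable.bdd_mul hφ ((hcont.pow n).aestronglyMeasurable) (c := 1) (Eventually.of_forall fun x => ?_)
    rw [norm_pow, hwn]
    exact pow_le_one₀ (norm_nonneg z) hz.le
  have hFnorm : ∀ n, (∫ x, ‖F n x‖ ∂μ) = ‖z‖ ^ n * ∫ x, ‖φ x‖ ∂μ := by
    intro n
    rw [← integral_const_mul]
    refine integral_congr_ae (Eventually.of_forall fun x => ?_)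
    rw [hF]
    simp only [norm_mul, norm_pow, hwn]
  have hsumm : Summable fun n => ∫ x, ‖F n x‖ ∂μ := by
    refine Summable.of_nonneg_of_le (fun n => integral_nonneg fun x => norm_nonneg _)
      (fun n => le_of_eq (hFnorm n))
      (((summable_geometric_of_lt_one (norm_nonneg z) hz)).mul_right _)
  have key := hasSum_integral_of_summable_integral_norm hFint hsumm
  have h2 : (∫ x, ∑' n, F n x ∂μ)
      = ∫ x, φ x * (1 - w x)⁻¹ ∂μ := by
    refine integral_congr_ae (Eventually.of_forall fun x => ?_)
    rw [hF]
    simp only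
    rw [tsum_mul_right, tsum_geometric_of_norm_lt_one (hw1 x), mul_comm]
  rw [h2] at key
  refine key.congr_fun fun n => Eq.symm ?_
  rw [hF]
  simp only
  have hexp : ∀ x : ℝ, w x ^ n = z ^ n * Complex.exp (-(2 * Real.pi * Complex.I * n * x)) := by
    intro x
    rw [hw]
    simp only [mul_pow]
    congr 1
    rw [← Complex.exp_nat_mul]
    congr 1
    ring
  calc (∫ x, w x ^ n * φ x ∂μ)
      = ∫ x, z ^ n * (Complex.exp (-(2 * Real.pi * Complex.I * n * x)) * φ x) ∂μ := by
        refine integral_congr_ae (Eventually.of_forall fun x => ?_)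
        simp only
        rw [hexp x, mul_assoc]
    _ = (∫ x, Complex.exp (-(2 * Real.pi * Complex.I * n * x)) * φ x ∂μ) * z ^ n := by
        rw [integral_const_mul, mul_comm]

lemma denom_ne_zero (μ : Measure ℝ) [IsProbabilityMeasure μ] (z : ℂ) (hz : ‖z‖ < 1) :
    (∫ x, (1 - z * Complex.exp (-(2 * Real.pi * Complex.I * x)))⁻¹ ∂μ) ≠ 0 := by
  set w : ℝ → ℂ := fun x => z * Complex.exp (-(2 * Real.pi * Complex.I * x)) with hw
  have hwn : ∀ x : ℝ, ‖w x‖ = ‖z‖ := by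
    intro x
    rw [hw]
    simp only [norm_mul, norm_exp_I_mul, mul_one]
  have hne : ∀ x : ℝ, (1 : ℂ) - w x ≠ 0 := by
    intro x h
    have : (1:ℂ) = w x := by linear_combination h
    have := congrArg norm this
    rw [hwn, norm_one] at this
    linarith
  set G : ℝ → ℂ := fun x => (1 - w x)⁻¹ with hG
  have hGcont : Continuous G := by
    refine Continuous.inv₀ (continuous_const.sub (continuous_w z)) hne
  have hGbd : ∀ x : ℝ, ‖G x‖ ≤ (1 - ‖z‖)⁻¹ := by
    intro x
    rw [hG]
    simp only [norm_inv]
    refine inv_anti₀ (by linarith) ?_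
    calc 1 - ‖z‖ = ‖(1:ℂ)‖ - ‖w x‖ := by rw [norm_one, hwn]
      _ ≤ ‖1 - w x‖ := norm_sub_norm_le _ _
  have hGint : Integrable G μ := by
    refine Integrable.mono' (integrable_const ((1 - ‖z‖)⁻¹)) hGcont.aestronglyMeasurable
      (Eventually.of_forall hGbd)
  have hre : ∀ x : ℝ, (1:ℝ)/2 ≤ (G x).re := by
    intro x
    have hlt : Complex.normSq (w x) < 1 := by
      rw [← Complex.sq_norm, hwn]
      nlinarith [norm_nonneg z]
    rw [hG]
    simp only [Complex.inv_re]
    have h1 : (1 - w x).re = 1 - (w x).re := by simp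
    have h2 : Complex.normSq (1 - w x) = (1 - (w x).re)^2 + ((w x).im)^2 := by
      rw [Complex.normSq_apply]
      simp [Complex.sub_re, Complex.sub_im]
      ring
    have hsq := Complex.normSq_apply (w x)
    have hpos : 0 < (1 - (w x).re)^2 + ((w x).im)^2 := by nlinarith [hlt, hsq]
    rw [h1, h2, le_div_iff₀ hpos]
    nlinarith [hlt, hsq]
  have hre2 : (1:ℝ)/2 ≤ (∫ x, G x ∂μ).re := by
    have hint := integral_re hGint
    calc (1:ℝ)/2 = ∫ _x, (1:ℝ)/2 ∂μ := by simp
      _ ≤ ∫ x, RCLike.re (G x) ∂μ := by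
          refine integral_mono (integrable_const _) hGint.re fun x => hre x
      _ = RCLike.re (∫ x, G x ∂μ) := hint
      _ = (∫ x, G x ∂μ).re := by rw [RCLike.re_to_complex]
  intro h
  rw [hG] at h
  rw [h] at hre2
  norm_num at hre2

end KaczmarzAux

namespace KaczmarzAux


lemma norm_exp_nat (n : ℕ) (x : ℝ) :
    ‖Complex.exp (-(2 * Real.pi * Complex.I * n * x))‖ = 1 := by
  rw [Complex.norm_exp]
  have : (-(2 * (Real.pi:ℂ) * Complex.I * (n:ℂ) * (x:ℂ))).re = 0 := by
    simp [Complex.mul_re, Complex.mul_im]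
  rw [this, Real.exp_zero]

lemma conj_exp_nat (n : ℕ) (x : ℝ) :
    (starRingEnd ℂ) (Complex.exp (2 * Real.pi * Complex.I * n * x))
      = Complex.exp (-(2 * Real.pi * Complex.I * n * x)) := by
  rw [← Complex.exp_conj]
  congr 1
  simp only [map_mul, map_ofNat, Complex.conj_ofReal, Complex.conj_I, map_natCast]
  ring

end KaczmarzAux

open KaczmarzAux

/-- Let `μ` be a singular Borel probability measure on `[0,1)`, `{g_n}` the
Kaczmarz auxiliary sequence of the exponentials in `L²(μ)`, and `f ∈ L²(μ)`.  Then for every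
`z` in the open unit disk, the normalized Cauchy transform satisfies
`V_μ f(z) = (∫₀¹ f(x)/(1 - z e^{-2πix}) dμ(x)) / (∫₀¹ 1/(1 - z e^{-2πix}) dμ(x))
          = Σ_{n=0}^∞ ⟨f, g_n⟩ zⁿ`.
(Here `⟨f, g_n⟩` denotes the inner product linear in the first slot, i.e. `inner (g n) f`.) -/
theorem normalized_cauchy_transform_series
    (μ : Measure ℝ) [IsProbabilityMeasure μ]
    (hsupp : μ (Set.Ico (0 : ℝ) 1)ᶜ = 0)
    (hsing : μ.MutuallySingular MeasureTheory.volume)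
    (e : ℕ → Lp ℂ 2 μ)
    (he : ∀ n : ℕ, (e n : ℝ → ℂ) =ᵐ[μ]
      fun x => Complex.exp (2 * Real.pi * Complex.I * n * x))
    (g : ℕ → Lp ℂ 2 μ)
    (hg0 : g 0 = e 0)
    (hg : ∀ n : ℕ, g (n + 1) =
      e (n + 1) - ∑ i ∈ Finset.range (n + 1), (inner ℂ (e i) (e (n + 1)) : ℂ) • g i)
    (f : Lp ℂ 2 μ) :
    ∀ z : ℂ, ‖z‖ < 1 →
      HasSum (fun n : ℕ => (inner ℂ (g n) f : ℂ) * z ^ n)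
        ((∫ x, (f : ℝ → ℂ) x / (1 - z * Complex.exp (-(2 * Real.pi * Complex.I * x))) ∂μ) /
          (∫ x, (1 - z * Complex.exp (-(2 * Real.pi * Complex.I * x)))⁻¹ ∂μ)) := by
  intro z hz
  have hf_int : Integrable (f : ℝ → ℂ) μ := (Lp.memLp f).integrable one_le_two
  have hinner : ∀ u v : Lp ℂ 2 μ, (inner ℂ u v : ℂ)
      = ∫ x, (starRingEnd ℂ) ((u : ℝ → ℂ) x) * (v : ℝ → ℂ) x ∂μ := by
    intro u v
    rw [MeasureTheory.L2.inner_def]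
    simp [RCLike.inner_apply, mul_comm]
  have repA : ∀ n : ℕ, (inner ℂ (e n) f : ℂ)
      = ∫ x, Complex.exp (-(2 * Real.pi * Complex.I * n * x)) * (f : ℝ → ℂ) x ∂μ := by
    intro n
    rw [hinner]
    refine integral_congr_ae ?_
    filter_upwards [he n] with x hx
    rw [hx, conj_exp_nat]
  set B : ℕ → ℂ := fun n => (inner ℂ (e n) (e 0) : ℂ) with hB
  have repB : ∀ n : ℕ, B n
      = ∫ x, Complex.exp (-(2 * Real.pi * Complex.I * n * x)) * 1 ∂μ := by
    intro n
    rw [hB]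
    simp only
    rw [hinner]
    refine integral_congr_ae ?_
    filter_upwards [he n, he 0] with x hx hx0
    rw [hx, hx0, conj_exp_nat]
    norm_num
  have hβ0 : B 0 = 1 := by
    rw [repB 0]
    have : ∀ x : ℝ, Complex.exp (-(2 * Real.pi * Complex.I * (0:ℕ) * x)) * 1 = 1 := by
      intro x; norm_num
    rw [integral_congr_ae (Eventually.of_forall this)]
    simp [measure_univ]
  have inner_sub : ∀ i j : ℕ, i ≤ j → (inner ℂ (e j) (e i) : ℂ) = B (j - i) := by
    intro i j hij
    rw [hB]
    simp only
    rw [hinner, hinner]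
    refine integral_congr_ae ?_
    filter_upwards [he i, he j, he (j - i), he 0] with x h1 h2 h3 h4
    rw [h1, h2, h3, h4, ← Complex.exp_conj, ← Complex.exp_conj, ← Complex.exp_add,
      ← Complex.exp_add]
    congr 1
    have hcast : ((j - i : ℕ) : ℂ) = (j : ℂ) - (i : ℂ) := by
      push_cast [hij]
      ring
    simp only [map_mul, map_ofNat, Complex.conj_ofReal, Complex.conj_I, map_natCast]
    rw [hcast]
    push_cast
    ring
  have hab : ∀ n : ℕ, (inner ℂ (e n) f : ℂ)
      = ∑ i ∈ Finset.range (n + 1), B (n - i) * (inner ℂ (g i) f : ℂ) := by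
    intro n
    cases n with
    | zero =>
      simp [Finset.sum_range_one, hβ0, hg0]
    | succ n =>
      have he' : e (n + 1) = g (n + 1)
          + ∑ i ∈ Finset.range (n + 1), (inner ℂ (e i) (e (n + 1)) : ℂ) • g i := by
        rw [hg n]; abel
      have hterm : ∀ i ∈ Finset.range (n + 1),
          (inner ℂ ((inner ℂ (e i) (e (n + 1)) : ℂ) • g i) f : ℂ)
            = B (n + 1 - i) * (inner ℂ (g i) f : ℂ) := by
        intro i hi
        rw [inner_smul_left]
        congr 1
        rw [inner_conj_symm]
        exact inner_sub i (n + 1) (le_of_lt (Finset.mem_range.mp hi))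
      have hsum2 : (∑ i ∈ Finset.range (n + 1),
            (inner ℂ ((inner ℂ (e i) (e (n + 1)) : ℂ) • g i) f : ℂ))
          = ∑ i ∈ Finset.range (n + 1), B (n + 1 - i) * (inner ℂ (g i) f : ℂ) :=
        Finset.sum_congr rfl hterm
      rw [he', inner_add_left, sum_inner, hsum2,
        Finset.sum_range_succ (fun i => B (n + 1 - i) * (inner ℂ (g i) f : ℂ)) (n + 1),
        Nat.sub_self, hβ0, one_mul]
      exact add_comm _ _
  have hCa : ∀ n, ‖(inner ℂ (e n) f : ℂ)‖ ≤ ∫ x, ‖(f : ℝ → ℂ) x‖ ∂μ := by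
    intro n
    rw [repA n]
    refine (norm_integral_le_integral_norm _).trans (le_of_eq ?_)
    refine integral_congr_ae (Eventually.of_forall fun x => ?_)
    simp only [norm_mul, norm_exp_nat, one_mul]
  have hCβ : ∀ n, ‖B n‖ ≤ 1 := by
    intro n
    rw [repB n]
    refine (norm_integral_le_integral_norm _).trans (le_of_eq ?_)
    have : ∀ x : ℝ, ‖Complex.exp (-(2 * Real.pi * Complex.I * n * x)) * 1‖ = 1 := by
      intro x; simp only [norm_mul, norm_exp_nat, norm_one, one_mul]
    rw [integral_congr_ae (Eventually.of_forall this)]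
    simp [measure_univ]
  have hD : ∀ w : ℂ, ‖w‖ < 1 → (∑' n, B n * w ^ n) ≠ 0 := by
    intro w hw
    have h1 := hasSum_integral μ (fun _ => (1:ℂ)) (integrable_const 1) w hw
    have h1' : HasSum (fun n => B n * w ^ n)
        (∫ x, (1:ℂ) * (1 - w * Complex.exp (-(2 * Real.pi * Complex.I * x)))⁻¹ ∂μ) :=
      h1.congr_fun fun n => by rw [repB n]
    rw [h1'.tsum_eq]
    have : (∫ x, (1:ℂ) * (1 - w * Complex.exp (-(2 * Real.pi * Complex.I * x)))⁻¹ ∂μ)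
        = ∫ x, (1 - w * Complex.exp (-(2 * Real.pi * Complex.I * x)))⁻¹ ∂μ := by
      simp only [one_mul]
    rw [this]
    exact denom_ne_zero μ w hw
  have main := hasSum_quot (fun n => (inner ℂ (e n) f : ℂ)) B (fun n => (inner ℂ (g n) f : ℂ))
      (∫ x, ‖(f : ℝ → ℂ) x‖ ∂μ) 1 hCa hCβ hβ0 hab hD z hz
  have hAs : HasSum (fun n => (inner ℂ (e n) f : ℂ) * z ^ n)
      (∫ x, (f : ℝ → ℂ) x * (1 - z * Complex.exp (-(2 * Real.pi * Complex.I * x)))⁻¹ ∂μ) :=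
    (hasSum_integral μ (f : ℝ → ℂ) hf_int z hz).congr_fun fun n => by rw [repA n]
  have hBs : HasSum (fun n => B n * z ^ n)
      (∫ x, (1:ℂ) * (1 - z * Complex.exp (-(2 * Real.pi * Complex.I * x)))⁻¹ ∂μ) :=
    (hasSum_integral μ (fun _ => (1:ℂ)) (integrable_const 1) z hz).congr_fun
      fun n => by rw [repB n]
  rw [hAs.tsum_eq, hBs.tsum_eq] at main
  simp only [div_eq_mul_inv, one_mul] at main ⊢
  exact main
end
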